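/- arXiv:2402.11785 — 7 statements merged into one kernel-verified Lean document; each statement's English description precedes it below -/
import Mathlib

section
/- Let V : Fin m → Fin n → EuclideanSpace ℂ (Fin 2) be a pairwise orthogonal product family (all V p i ≠ 0, and for all p ≠ q there exists i with ⟪V p i, V q i⟫ = 0). Then V is extendible (there exists w : Fin n → EuclideanSpace ℂ (Fin 2) with all w i ≠ 0 such that for every row p some column i has ⟪w i, V p i⟫ = 0) if and only if there exist a subset S of the columns Fin n and vectors u i ≠ 0 for i ∈ S such that the number of rows p satisfying ⟪u i, V p i⟫ ≠ 0 for every i ∈ S is at most n − |S|. -/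
open scoped InnerProductSpace

/-- A pairwise orthogonal product family of size `m` on `n` qubits. -/
def PairwiseOrthProdFamily {m n : ℕ}
    (V : Fin m → Fin n → EuclideanSpace ℂ (Fin 2)) : Prop :=
  (∀ p i, V p i ≠ 0) ∧ ∀ p q : Fin m, p ≠ q → ∃ i, ⟪V p i, V q i⟫_ℂ = 0

/-- Extendibility: a nonzero product vector orthogonal to every row exists. -/
def Extendible {m n : ℕ}
    (V : Fin m → Fin n → EuclideanSpace ℂ (Fin 2)) : Prop :=
  ∃ w : Fin n → EuclideanSpace ℂ (Fin 2),
    (∀ i, w i ≠ 0) ∧ ∀ p, ∃ i, ⟪w i, V p i⟫_ℂ = 0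

/-- An `n`-qubit unextendible product basis of size `m`. -/
def IsUPB {m n : ℕ}
    (V : Fin m → Fin n → EuclideanSpace ℂ (Fin 2)) : Prop :=
  PairwiseOrthProdFamily V ∧ m < 2 ^ n ∧ ¬ Extendible V

/-- In `ℂ²`, every nonzero vector has a nonzero orthogonal vector. -/
lemma exists_orth (v : EuclideanSpace ℂ (Fin 2)) (hv : v ≠ 0) :
    ∃ z : EuclideanSpace ℂ (Fin 2), z ≠ 0 ∧ ⟪z, v⟫_ℂ = 0 := by
  refine ⟨!₂[-(starRingEnd ℂ) (v 1), (starRingEnd ℂ) (v 0)], ?_, ?_⟩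
  · intro h
    apply hv
    have h0 : (!₂[-(starRingEnd ℂ) (v 1), (starRingEnd ℂ) (v 0)] : EuclideanSpace ℂ (Fin 2)) 0 = 0 := by
      rw [h]; rfl
    have h1 : (!₂[-(starRingEnd ℂ) (v 1), (starRingEnd ℂ) (v 0)] : EuclideanSpace ℂ (Fin 2)) 1 = 0 := by
      rw [h]; rfl
    simp only [Matrix.cons_val_zero, Matrix.cons_val_one, Matrix.head_cons, neg_eq_zero,
      map_eq_zero] at h0 h1
    ext i
    fin_cases i
    · exact h1
    · exact h0
  · simp [PiLp.inner_apply, Fin.sum_univ_two, RCLike.inner_apply]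
    ring

/-- extendibility criterion via a subset of columns. -/
theorem extendible_iff_column_subset {m n : ℕ}
    (V : Fin m → Fin n → EuclideanSpace ℂ (Fin 2))
    (hV : PairwiseOrthProdFamily V) :
    Extendible V ↔
      ∃ (S : Finset (Fin n)) (u : Fin n → EuclideanSpace ℂ (Fin 2)),
        (∀ i ∈ S, u i ≠ 0) ∧
        (Finset.univ.filter
          (fun p : Fin m => ∀ i ∈ S, ⟪u i, V p i⟫_ℂ ≠ 0)).card ≤ n - S.card := by
  classical
  constructor
  · rintro ⟨w, hw0, hw⟩
    refine ⟨Finset.univ, w, fun i _ => hw0 i, ?_⟩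
    have he : (Finset.univ.filter
        (fun p : Fin m => ∀ i ∈ (Finset.univ : Finset (Fin n)), ⟪w i, V p i⟫_ℂ ≠ 0)) = ∅ := by
      ext p
      simp only [Finset.mem_filter, Finset.mem_univ, true_and, Finset.notMem_empty, iff_false]
      intro h
      obtain ⟨i, hi⟩ := hw p
      exact h i trivial hi
    rw [he]
    simp
  · rintro ⟨S, u, hu, hcard⟩
    set T := Finset.univ.filter (fun p : Fin m => ∀ i ∈ S, ⟪u i, V p i⟫_ℂ ≠ 0) with hT
    have hle : Fintype.card ↥T ≤ Fintype.card ↥(Sᶜ) := by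
      rw [Fintype.card_coe, Fintype.card_coe, Finset.card_compl, Fintype.card_fin]
      exact hcard
    obtain ⟨f⟩ := Function.Embedding.nonempty_of_card_le hle
    have horth : ∀ (p : Fin m) (i : Fin n),
        ∃ z : EuclideanSpace ℂ (Fin 2), z ≠ 0 ∧ ⟪z, V p i⟫_ℂ = 0 :=
      fun p i => exists_orth _ (hV.1 p i)
    refine ⟨fun i =>
      if h : ∃ p : ↥T, ((f p : ↥(Sᶜ)) : Fin n) = i then
        (horth ((h.choose : ↥T) : Fin m) i).choose
      else if i ∈ S then u i else EuclideanSpace.single 0 1, ?_, ?_⟩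
    · intro i
      by_cases h : ∃ p : ↥T, ((f p : ↥(Sᶜ)) : Fin n) = i
      · simp only [h, dif_pos]
        exact (horth ((h.choose : ↥T) : Fin m) i).choose_spec.1
      · simp only [h, dif_neg, not_false_iff]
        by_cases hS : i ∈ S
        · simp only [hS, if_pos]
          exact hu i hS
        · simp only [hS, if_neg, not_false_iff]
          intro hz
          have : (EuclideanSpace.single (0 : Fin 2) (1 : ℂ)) 0 = 0 := by rw [hz]; rfl
          simp at this
    · intro p
      by_cases hp : p ∈ T
      · refine ⟨((f ⟨p, hp⟩ : ↥(Sᶜ)) : Fin n), ?_⟩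
        have h : ∃ q : ↥T, ((f q : ↥(Sᶜ)) : Fin n) = ((f ⟨p, hp⟩ : ↥(Sᶜ)) : Fin n) :=
          ⟨⟨p, hp⟩, rfl⟩
        simp only [h, dif_pos]
        have hq : ((f h.choose : ↥(Sᶜ)) : Fin n) = ((f ⟨p, hp⟩ : ↥(Sᶜ)) : Fin n) := h.choose_spec
        have : h.choose = ⟨p, hp⟩ := f.injective (Subtype.ext hq)
        rw [this] at *
        exact (horth p _).choose_spec.2
      · rw [hT, Finset.mem_filter] at hp
        push_neg at hp
        obtain ⟨i, hiS, hi⟩ := hp (Finset.mem_univ p)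
        refine ⟨i, ?_⟩
        have h : ¬ ∃ q : ↥T, ((f q : ↥(Sᶜ)) : Fin n) = i := by
          rintro ⟨q, hq⟩
          have := (f q).2
          rw [hq] at this
          exact (Finset.mem_compl.mp this) hiS
        simp only [h, dif_neg, not_false_iff, hiS, if_pos]
        exact hi
end

section
/- There exists a 5-qubit unextendible product basis of size 8, i.e., a family V : Fin 8 → Fin 5 → EuclideanSpace ℂ (Fin 2) of nonzero entries such that any two rows are orthogonal as product vectors and no nonzero product vector is orthogonal to all eight rows. -/
open scoped InnerProductSpace

/- ### Auxiliary construction -/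

open Complex

/-- Eight pairwise non-parallel directions in `ℂ²`, given as coordinate pairs.
Consecutive pairs `(2k, 2k+1)` are orthogonal. -/
noncomputable def ccUPB : Fin 8 → ℂ × ℂ :=
  ![(1,0),(0,1),(1,1),(1,-1),(1,I),(1,-I),(1,2),(2,-1)]

/-- The corresponding vectors in `EuclideanSpace ℂ (Fin 2)`. -/
noncomputable def rrUPB (s : Fin 8) : EuclideanSpace ℂ (Fin 2) := !₂[(ccUPB s).1, (ccUPB s).2]

/-- The symbol matrix of the UPB. -/
def sgUPB : Fin 8 → Fin 5 → Fin 8 :=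
  ![![0,0,0,0,0], ![1,2,2,2,2], ![1,3,4,4,4], ![0,1,6,6,6],
    ![2,1,3,5,7], ![3,3,1,7,5], ![3,2,7,1,3], ![2,0,5,3,1]]

/-- Witness column for orthogonality of rows `p ≠ q`. -/
def wcolUPB : Fin 8 → Fin 8 → Fin 5 :=
  ![![0,0,0,1,1,2,3,4], ![0,0,1,0,2,1,4,3], ![0,1,0,0,3,4,1,2], ![1,0,0,0,4,3,2,1],
    ![1,2,3,4,0,0,0,1], ![2,1,4,3,0,0,1,0], ![3,4,1,2,0,1,0,0], ![4,3,2,1,1,0,0,0]]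

lemma hOP_UPB : ∀ p q : Fin 8, p ≠ q →
    (sgUPB p (wcolUPB p q)).val / 2 = (sgUPB q (wcolUPB p q)).val / 2 ∧
      sgUPB p (wcolUPB p q) ≠ sgUPB q (wcolUPB p q) := by
  decide

lemma hcard_UPB : ∀ i : Fin 5, ∀ x : Fin 8,
    (Finset.univ.filter (fun p : Fin 8 => sgUPB p i = x)).card ≤ (if i.val ≤ 1 then 2 else 1) := by
  decide

/-- Pigeonhole: no choice of one symbol per column covers all eight rows. -/
lemma hcov_UPB (f : Fin 5 → Fin 8) : ∃ p : Fin 8, ∀ i, sgUPB p i ≠ f i := by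
  by_contra hc
  push_neg at hc
  have hsub : (Finset.univ : Finset (Fin 8)) ⊆
      (Finset.univ : Finset (Fin 5)).biUnion
        (fun i => Finset.univ.filter fun p : Fin 8 => sgUPB p i = f i) := by
    intro p _
    obtain ⟨i, hi⟩ := hc p
    exact Finset.mem_biUnion.2 ⟨i, Finset.mem_univ _, Finset.mem_filter.2 ⟨Finset.mem_univ _, hi⟩⟩
  have h8 : (8 : ℕ) ≤ ∑ i : Fin 5,
      (Finset.univ.filter fun p : Fin 8 => sgUPB p i = f i).card := by
    calc (8 : ℕ) = (Finset.univ : Finset (Fin 8)).card := by simp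
    _ ≤ _ := Finset.card_le_card hsub
    _ ≤ _ := Finset.card_biUnion_le
  have hle : ∑ i : Fin 5, (Finset.univ.filter fun p : Fin 8 => sgUPB p i = f i).card
      ≤ ∑ i : Fin 5, (if i.val ≤ 1 then 2 else 1) :=
    Finset.sum_le_sum fun i _ => hcard_UPB i (f i)
  have hsum : ∑ i : Fin 5, (if i.val ≤ 1 then 2 else 1 : ℕ) = 7 := by decide
  omega

lemma rr_ne_zero (s : Fin 8) : rrUPB s ≠ 0 := by
  intro h
  have h0 : ⟪rrUPB s, rrUPB s⟫_ℂ = 0 := by rw [h]; simp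
  fin_cases s <;>
    norm_num [rrUPB, ccUPB, PiLp.inner_apply, RCLike.inner_apply, Fin.sum_univ_two,
      Complex.ext_iff] at h0

lemma horth_UPB (s t : Fin 8) (h1 : s.val / 2 = t.val / 2) (h2 : s ≠ t) :
    ⟪rrUPB s, rrUPB t⟫_ℂ = 0 := by
  fin_cases s <;> fin_cases t <;>
    first
    | exact absurd rfl h2
    | exact absurd h1 (by decide)
    | norm_num [rrUPB, ccUPB, PiLp.inner_apply, RCLike.inner_apply, Fin.sum_univ_two,
        Complex.ext_iff]

lemma cramer_UPB (a b c0 c1 d0 d1 : ℂ) (h1 : a*c0 + b*c1 = 0) (h2 : a*d0 + b*d1 = 0)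
    (hd : c0*d1 - c1*d0 ≠ 0) : a = 0 ∧ b = 0 := by
  constructor
  · have h : a * (c0*d1 - c1*d0) = d1*(a*c0+b*c1) - c1*(a*d0+b*d1) := by ring
    rw [h1, h2] at h; simp only [mul_zero, sub_zero, zero_sub, mul_eq_zero] at h
    rcases h with h | h
    · exact h
    · exact absurd h hd
  · have h : b * (c0*d1 - c1*d0) = c0*(a*d0+b*d1) - d0*(a*c0+b*c1) := by ring
    rw [h1, h2] at h; simp only [mul_zero, sub_zero, zero_sub, mul_eq_zero] at h
    rcases h with h | h
    · exact h
    · exact absurd h hd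

lemma detNe_UPB (s t : Fin 8) (h : s ≠ t) :
    (ccUPB s).1 * (ccUPB t).2 - (ccUPB s).2 * (ccUPB t).1 ≠ 0 := by
  fin_cases s <;> fin_cases t <;>
    first
    | exact absurd rfl h
    | norm_num [ccUPB, Complex.ext_iff]

/-- A nonzero vector of `ℂ²` cannot be orthogonal to two non-parallel directions. -/
lemma indep_UPB (s t : Fin 8) (hst : s ≠ t) (w : EuclideanSpace ℂ (Fin 2)) (hw : w ≠ 0)
    (h1 : ⟪w, rrUPB s⟫_ℂ = 0) (h2 : ⟪w, rrUPB t⟫_ℂ = 0) : False := by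
  have e1 : (starRingEnd ℂ) (w 0) * (ccUPB s).1 + (starRingEnd ℂ) (w 1) * (ccUPB s).2 = 0 := by
    simpa [rrUPB, PiLp.inner_apply, RCLike.inner_apply, Fin.sum_univ_two, mul_comm] using h1
  have e2 : (starRingEnd ℂ) (w 0) * (ccUPB t).1 + (starRingEnd ℂ) (w 1) * (ccUPB t).2 = 0 := by
    simpa [rrUPB, PiLp.inner_apply, RCLike.inner_apply, Fin.sum_univ_two, mul_comm] using h2
  obtain ⟨ha, hb⟩ := cramer_UPB _ _ _ _ _ _ e1 e2 (detNe_UPB s t hst)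
  rw [map_eq_zero] at ha hb
  apply hw
  ext i
  fin_cases i
  · exact ha
  · exact hb

/-- there exists a 5-qubit UPB of size 8. -/
theorem exists_upb_8_5 :
    ∃ V : Fin 8 → Fin 5 → EuclideanSpace ℂ (Fin 2), IsUPB V := by
  classical
  refine ⟨fun p i => rrUPB (sgUPB p i), ⟨fun p i => rr_ne_zero _, ?_⟩, by norm_num, ?_⟩
  · intro p q hpq
    exact ⟨wcolUPB p q, horth_UPB _ _ (hOP_UPB p q hpq).1 (hOP_UPB p q hpq).2⟩
  · rintro ⟨w, hw, hk⟩
    set F : Fin 5 → Fin 8 := fun i =>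
      if h : ∃ s : Fin 8, ⟪w i, rrUPB s⟫_ℂ = 0 then h.choose else 0 with hF
    obtain ⟨p, hp⟩ := hcov_UPB F
    obtain ⟨i, hi⟩ := hk p
    have hex : ∃ s : Fin 8, ⟪w i, rrUPB s⟫_ℂ = 0 := ⟨sgUPB p i, hi⟩
    have hFi : ⟪w i, rrUPB (F i)⟫_ℂ = 0 := by
      rw [hF]; simp only [dif_pos hex]; exact hex.choose_spec
    exact indep_UPB _ _ (hp i) (w i) (hw i) hi hFi
end

section
/- There exists a 7-qubit unextendible product basis of size 14, i.e., a family V : Fin 14 → Fin 7 → EuclideanSpace ℂ (Fin 2) of nonzero entries such that any two rows are orthogonal as product vectors and no nonzero product vector is orthogonal to all fourteen rows. -/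
open scoped InnerProductSpace

open scoped ComplexConjugate

/- ### Auxiliary construction -/

/-- First coordinates of the 8 directions used on each qubit. -/
def vA : Fin 8 → ℂ := ![1,1,1,2,1,3,1,0]
/-- Second coordinates of the 8 directions used on each qubit. -/
def vB : Fin 8 → ℂ := ![1,-1,2,-1,3,-1,0,1]
/-- The 8 directions: pairs (2k, 2k+1) are orthogonal; all are pairwise independent. -/
def v8 (a : Fin 8) : EuclideanSpace ℂ (Fin 2) := !₂[vA a, vB a]

@[simp] lemma vA_0 : vA 0 = 1 := rfl
@[simp] lemma vB_0 : vB 0 = (1) := rfl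
@[simp] lemma vA_1 : vA 1 = 1 := rfl
@[simp] lemma vB_1 : vB 1 = (-1) := rfl
@[simp] lemma vA_2 : vA 2 = 1 := rfl
@[simp] lemma vB_2 : vB 2 = (2) := rfl
@[simp] lemma vA_3 : vA 3 = 2 := rfl
@[simp] lemma vB_3 : vB 3 = (-1) := rfl
@[simp] lemma vA_4 : vA 4 = 1 := rfl
@[simp] lemma vB_4 : vB 4 = (3) := rfl
@[simp] lemma vA_5 : vA 5 = 3 := rfl
@[simp] lemma vB_5 : vB 5 = (-1) := rfl
@[simp] lemma vA_6 : vA 6 = 1 := rfl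
@[simp] lemma vB_6 : vB 6 = (0) := rfl
@[simp] lemma vA_7 : vA 7 = 0 := rfl
@[simp] lemma vB_7 : vB 7 = (1) := rfl

lemma inner2 (x y : EuclideanSpace ℂ (Fin 2)) :
    ⟪x, y⟫_ℂ = conj (x 0) * y 0 + conj (x 1) * y 1 := by
  simp [PiLp.inner_apply, Fin.sum_univ_two, RCLike.inner_apply]; ring

lemma horth : ∀ a b : Fin 8, a.val / 2 = b.val / 2 → a ≠ b → ⟪v8 a, v8 b⟫_ℂ = 0 := by
  intro a b h1 h2
  fin_cases a <;> fin_cases b <;>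
    simp_all [v8, inner2] <;> norm_num [Complex.conj_ofNat]

lemma hnz : ∀ a : Fin 8, v8 a ≠ 0 := by
  intro a h
  have h0 := congrArg (fun v : EuclideanSpace ℂ (Fin 2) => v 0) h
  have h1 := congrArg (fun v : EuclideanSpace ℂ (Fin 2) => v 1) h
  fin_cases a <;> simp_all [v8]

lemma solve2 (x y w : EuclideanSpace ℂ (Fin 2))
    (hd : x 0 * y 1 - x 1 * y 0 ≠ 0)
    (h1 : ⟪w, x⟫_ℂ = 0) (h2 : ⟪w, y⟫_ℂ = 0) : w = 0 := by
  rw [inner2] at h1 h2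
  have e0 : conj (w 0) * (x 0 * y 1 - x 1 * y 0)
      = (conj (w 0) * x 0 + conj (w 1) * x 1) * y 1
        - (conj (w 0) * y 0 + conj (w 1) * y 1) * x 1 := by ring
  have e1 : conj (w 1) * (x 0 * y 1 - x 1 * y 0)
      = (conj (w 0) * y 0 + conj (w 1) * y 1) * x 0
        - (conj (w 0) * x 0 + conj (w 1) * x 1) * y 0 := by ring
  rw [h1, h2] at e0 e1
  simp only [zero_mul, sub_zero, zero_sub, sub_self, neg_zero] at e0 e1
  have hw0 : w 0 = 0 := by
    have := (mul_eq_zero.mp e0).resolve_right hd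
    simpa using congrArg (starRingEnd ℂ) this
  have hw1 : w 1 = 0 := by
    have := (mul_eq_zero.mp e1).resolve_right hd
    simpa using congrArg (starRingEnd ℂ) this
  ext j
  fin_cases j
  · exact hw0
  · exact hw1

lemma hdet : ∀ a b : Fin 8, a ≠ b → vA a * vB b - vB a * vA b ≠ 0 := by
  intro a b hab
  fin_cases a <;> fin_cases b <;> simp_all <;> norm_num

lemma hindep : ∀ a b : Fin 8, a ≠ b → ∀ w : EuclideanSpace ℂ (Fin 2),
    ⟪w, v8 a⟫_ℂ = 0 → ⟪w, v8 b⟫_ℂ = 0 → w = 0 := by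
  intro a b hab w h1 h2
  refine solve2 (v8 a) (v8 b) w ?_ h1 h2
  rw [show v8 a 0 = vA a from rfl, show v8 a 1 = vB a from rfl,
      show v8 b 0 = vA b from rfl, show v8 b 1 = vB b from rfl]
  exact hdet a b hab

/-- The 14 × 7 color matrix of the design, base-8 encoded. -/
def colN : ℕ := 30495194139223628666307789188041473825689420181347267757721001831169457836275159136290982

def Col (p : Fin 14) (i : Fin 7) : Fin 8 :=
  ⟨colN / 8 ^ (7 * p.val + i.val) % 8, Nat.mod_lt _ (by norm_num)⟩

def S (i : Fin 7) (k : Fin 8) : Finset (Fin 14) := Finset.univ.filter (fun p => Col p i = k)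

lemma design_orth : ∀ p q : Fin 14, p ≠ q →
    ∃ i : Fin 7, (Col p i).val / 2 = (Col q i).val / 2 ∧ Col p i ≠ Col q i := by decide

lemma card_S_le : ∀ (i : Fin 7) (k : Fin 8), (S i k).card ≤ 2 := by decide

lemma design_key :
    ∀ c0 : Fin 8, 2 ≤ (S 0 c0).card →
    ∀ c1 : Fin 8, 2 ≤ (S 1 c1).card → (S 0 c0) ∩ S 1 c1 = ∅ →
    ∀ c2 : Fin 8, 2 ≤ (S 2 c2).card → (S 0 c0 ∪ S 1 c1) ∩ S 2 c2 = ∅ →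
    ∀ c3 : Fin 8, 2 ≤ (S 3 c3).card → (S 0 c0 ∪ S 1 c1 ∪ S 2 c2) ∩ S 3 c3 = ∅ →
    ∀ c4 : Fin 8, 2 ≤ (S 4 c4).card → (S 0 c0 ∪ S 1 c1 ∪ S 2 c2 ∪ S 3 c3) ∩ S 4 c4 = ∅ →
    ∀ c5 : Fin 8, 2 ≤ (S 5 c5).card → (S 0 c0 ∪ S 1 c1 ∪ S 2 c2 ∪ S 3 c3 ∪ S 4 c4) ∩ S 5 c5 = ∅ →
    ∀ c6 : Fin 8, 2 ≤ (S 6 c6).card → (S 0 c0 ∪ S 1 c1 ∪ S 2 c2 ∪ S 3 c3 ∪ S 4 c4 ∪ S 5 c5) ∩ S 6 c6 = ∅ →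
    S 0 c0 ∪ S 1 c1 ∪ S 2 c2 ∪ S 3 c3 ∪ S 4 c4 ∪ S 5 c5 ∪ S 6 c6 ≠ Finset.univ := by decide

/-- there exists a 7-qubit UPB of size 14. -/
theorem exists_upb_14_7 :
    ∃ V : Fin 14 → Fin 7 → EuclideanSpace ℂ (Fin 2), IsUPB V := by
  refine ⟨fun p i => v8 (Col p i), ⟨fun p i => hnz _, ?_⟩, by norm_num, ?_⟩
  · intro p q hpq
    obtain ⟨i, h1, h2⟩ := design_orth p q hpq
    exact ⟨i, horth _ _ h1 h2⟩
  · rintro ⟨w, hw, hcov⟩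
    choose g hg using hcov
    have P : ∀ p q : Fin 14, g p = g q → Col p (g p) = Col q (g p) := by
      intro p q hpq
      by_contra hne
      have h2 := hg q
      rw [← hpq] at h2
      exact hw (g p) (hindep _ _ hne (w (g p)) (hg p) h2)
    set fib : Fin 7 → Finset (Fin 14) :=
      fun i => Finset.univ.filter (fun p => g p = i) with hfib
    have hsub : ∀ (i : Fin 7) (p0 : Fin 14), g p0 = i → fib i ⊆ S i (Col p0 i) := by
      intro i p0 hp0 q hq
      have hgq : g q = i := by simpa [hfib] using hq
      have hPP := P p0 q (by rw [hp0, hgq])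
      rw [hp0] at hPP
      simp only [S, Finset.mem_filter, Finset.mem_univ, true_and]
      exact hPP.symm
    have hcard_le : ∀ i, (fib i).card ≤ 2 := by
      intro i
      rcases (fib i).eq_empty_or_nonempty with h | ⟨p0, hp0⟩
      · simp [h]
      · have hg0 : g p0 = i := by simpa [hfib] using hp0
        exact le_trans (Finset.card_le_card (hsub i p0 hg0)) (card_S_le i _)
    have hsum : ∑ i : Fin 7, (fib i).card = 14 := by
      have h14 := Finset.card_eq_sum_card_fiberwise
        (f := g) (s := Finset.univ) (t := Finset.univ) (fun x _ => Finset.mem_univ (g x))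
      simpa [hfib] using h14.symm
    have hcard : ∀ i, (fib i).card = 2 := by
      by_contra hc
      push_neg at hc
      obtain ⟨i0, hi0⟩ := hc
      have hlt : (fib i0).card < 2 := lt_of_le_of_ne (hcard_le i0) hi0
      have hslt : ∑ i : Fin 7, (fib i).card < ∑ _i : Fin 7, 2 :=
        Finset.sum_lt_sum (fun i _ => hcard_le i) ⟨i0, Finset.mem_univ _, hlt⟩
      rw [hsum] at hslt
      simp at hslt
    have hne : ∀ i, (fib i).Nonempty := by
      intro i
      apply Finset.card_pos.mp
      rw [hcard]
      norm_num
    choose rep hrep using hne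
    have hgrep : ∀ i, g (rep i) = i := by
      intro i
      simpa [hfib] using hrep i
    set c : Fin 7 → Fin 8 := fun i => Col (rep i) i with hc
    have hSeq : ∀ i, fib i = S i (c i) := by
      intro i
      refine Finset.eq_of_subset_of_card_le (hsub i (rep i) (hgrep i)) ?_
      rw [hcard]
      exact card_S_le i _
    have hdisj : ∀ i j : Fin 7, i ≠ j → S i (c i) ∩ S j (c j) = ∅ := by
      intro i j hij
      rw [← hSeq, ← hSeq]
      ext p
      simp only [Finset.mem_inter, Finset.mem_filter, Finset.mem_univ, true_and,
        Finset.notMem_empty, iff_false, hfib]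
      rintro ⟨h1, h2⟩
      exact hij (h1 ▸ h2)
    have hcard2 : ∀ i, 2 ≤ (S i (c i)).card := by
      intro i
      rw [← hSeq, hcard]
    have hcover : ∀ p : Fin 14, p ∈ S (g p) (c (g p)) := by
      intro p
      have hp : p ∈ fib (g p) := by simp [hfib]
      rw [hSeq] at hp
      exact hp
    have d1 : S 0 (c 0) ∩ S 1 (c 1) = ∅ := hdisj 0 1 (by decide)
    have d2 : (S 0 (c 0) ∪ S 1 (c 1)) ∩ S 2 (c 2) = ∅ := by
      rw [Finset.union_inter_distrib_right, hdisj 0 2 (by decide), hdisj 1 2 (by decide)]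
      simp
    have d3 : (S 0 (c 0) ∪ S 1 (c 1) ∪ S 2 (c 2)) ∩ S 3 (c 3) = ∅ := by
      rw [Finset.union_inter_distrib_right, Finset.union_inter_distrib_right,
        hdisj 0 3 (by decide), hdisj 1 3 (by decide), hdisj 2 3 (by decide)]
      simp
    have d4 : (S 0 (c 0) ∪ S 1 (c 1) ∪ S 2 (c 2) ∪ S 3 (c 3)) ∩ S 4 (c 4) = ∅ := by
      rw [Finset.union_inter_distrib_right, Finset.union_inter_distrib_right,
        Finset.union_inter_distrib_right, hdisj 0 4 (by decide), hdisj 1 4 (by decide),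
        hdisj 2 4 (by decide), hdisj 3 4 (by decide)]
      simp
    have d5 : (S 0 (c 0) ∪ S 1 (c 1) ∪ S 2 (c 2) ∪ S 3 (c 3) ∪ S 4 (c 4)) ∩ S 5 (c 5) = ∅ := by
      rw [Finset.union_inter_distrib_right, Finset.union_inter_distrib_right,
        Finset.union_inter_distrib_right, Finset.union_inter_distrib_right,
        hdisj 0 5 (by decide), hdisj 1 5 (by decide), hdisj 2 5 (by decide),
        hdisj 3 5 (by decide), hdisj 4 5 (by decide)]
      simp
    have d6 : (S 0 (c 0) ∪ S 1 (c 1) ∪ S 2 (c 2) ∪ S 3 (c 3) ∪ S 4 (c 4) ∪ S 5 (c 5))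
        ∩ S 6 (c 6) = ∅ := by
      rw [Finset.union_inter_distrib_right, Finset.union_inter_distrib_right,
        Finset.union_inter_distrib_right, Finset.union_inter_distrib_right,
        Finset.union_inter_distrib_right, hdisj 0 6 (by decide), hdisj 1 6 (by decide),
        hdisj 2 6 (by decide), hdisj 3 6 (by decide), hdisj 4 6 (by decide),
        hdisj 5 6 (by decide)]
      simp
    have hfinal := design_key (c 0) (hcard2 0) (c 1) (hcard2 1) d1 (c 2) (hcard2 2) d2
      (c 3) (hcard2 3) d3 (c 4) (hcard2 4) d4 (c 5) (hcard2 5) d5 (c 6) (hcard2 6) d6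
    apply hfinal
    apply Finset.eq_univ_of_forall
    intro p
    have hp := hcover p
    simp only [Finset.mem_union]
    generalize hgp : g p = i at hp
    fin_cases i
    · exact .inl (.inl (.inl (.inl (.inl (.inl hp)))))
    · exact .inl (.inl (.inl (.inl (.inl (.inr hp)))))
    · exact .inl (.inl (.inl (.inl (.inr hp))))
    · exact .inl (.inl (.inl (.inr hp)))
    · exact .inl (.inl (.inr hp))
    · exact .inl (.inr hp)
    · exact .inr hp
end

section
/- There exists a 4-qubit unextendible product basis of size 10, i.e., a family V : Fin 10 → Fin 4 → EuclideanSpace ℂ (Fin 2) of nonzero entries such that any two rows are orthogonal as product vectors and no nonzero product vector is orthogonal to all ten rows. -/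
open scoped InnerProductSpace

/-! ### Auxiliary construction -/

/-- First coordinates of the six single-qubit states used. -/
noncomputable def upbV0 : Fin 6 → ℂ := ![1, 0, 1, 1, 1, 1]

/-- Second coordinates of the six single-qubit states used. -/
noncomputable def upbV1 : Fin 6 → ℂ := ![0, 1, 1, -1, Complex.I, -Complex.I]

/-- The six single-qubit states: |0⟩, |1⟩, |+⟩, |−⟩, |+i⟩, |−i⟩. -/
noncomputable def upbSt (a : Fin 6) : EuclideanSpace ℂ (Fin 2) := WithLp.toLp 2 ![upbV0 a, upbV1 a]

@[simp] lemma upbSt_zero (a : Fin 6) : upbSt a 0 = upbV0 a := rfl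
@[simp] lemma upbSt_one (a : Fin 6) : upbSt a 1 = upbV1 a := rfl

@[simp] lemma upbV0_0 : upbV0 0 = 1 := rfl
@[simp] lemma upbV0_1 : upbV0 1 = 0 := rfl
@[simp] lemma upbV0_2 : upbV0 2 = 1 := rfl
@[simp] lemma upbV0_3 : upbV0 3 = 1 := rfl
@[simp] lemma upbV0_4 : upbV0 4 = 1 := rfl
@[simp] lemma upbV0_5 : upbV0 5 = 1 := rfl
@[simp] lemma upbV1_0 : upbV1 0 = 0 := rfl
@[simp] lemma upbV1_1 : upbV1 1 = 1 := rfl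
@[simp] lemma upbV1_2 : upbV1 2 = 1 := rfl
@[simp] lemma upbV1_3 : upbV1 3 = -1 := rfl
@[simp] lemma upbV1_4 : upbV1 4 = Complex.I := rfl
@[simp] lemma upbV1_5 : upbV1 5 = -Complex.I := rfl

lemma upb_inner (a b : Fin 6) :
    ⟪upbSt a, upbSt b⟫_ℂ = (starRingEnd ℂ) (upbV0 a) * upbV0 b
      + (starRingEnd ℂ) (upbV1 a) * upbV1 b := by
  simp [upbSt, PiLp.inner_apply, RCLike.inner_apply, Fin.sum_univ_two, mul_comm]

/-- Which pairs of states are orthogonal. -/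
def upbOrthB : Fin 6 → Fin 6 → Bool := fun a b =>
  (a = 0 ∧ b = 1) ∨ (a = 1 ∧ b = 0) ∨ (a = 2 ∧ b = 3) ∨ (a = 3 ∧ b = 2)
    ∨ (a = 4 ∧ b = 5) ∨ (a = 5 ∧ b = 4)

lemma upb_orth_inner (a b : Fin 6) (h : upbOrthB a b = true) :
    ⟪upbSt a, upbSt b⟫_ℂ = 0 := by
  fin_cases a <;> fin_cases b <;>
    simp_all [upbOrthB, upb_inner, Complex.conj_I]

lemma upbSt_ne_zero (a : Fin 6) : upbSt a ≠ 0 := by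
  have key : ∀ a : Fin 6, upbV0 a ≠ 0 ∨ upbV1 a ≠ 0 → upbSt a ≠ 0 := by
    intro a h h0
    have h1 : upbSt a 0 = 0 := by rw [h0]; rfl
    have h2 : upbSt a 1 = 0 := by rw [h0]; rfl
    rw [upbSt_zero] at h1; rw [upbSt_one] at h2
    rcases h with h | h <;> exact h (by assumption)
  fin_cases a <;> refine key _ ?_ <;>
    simp [Complex.I_ne_zero]

/-- A nonzero vector of `ℂ²` cannot be orthogonal to two independent vectors. -/
lemma upb_two_orth (w : EuclideanSpace ℂ (Fin 2)) (a b : Fin 6)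
    (hd : upbV0 a * upbV1 b - upbV1 a * upbV0 b ≠ 0)
    (ha : ⟪w, upbSt a⟫_ℂ = 0) (hb : ⟪w, upbSt b⟫_ℂ = 0) : w = 0 := by
  have h1 : (starRingEnd ℂ) (w 0) * upbV0 a + (starRingEnd ℂ) (w 1) * upbV1 a = 0 := by
    simpa [upbSt, PiLp.inner_apply, RCLike.inner_apply, Fin.sum_univ_two, mul_comm] using ha
  have h2 : (starRingEnd ℂ) (w 0) * upbV0 b + (starRingEnd ℂ) (w 1) * upbV1 b = 0 := by
    simpa [upbSt, PiLp.inner_apply, RCLike.inner_apply, Fin.sum_univ_two, mul_comm] using hb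
  have hc0 : (starRingEnd ℂ) (w 0) = 0 := by
    have e : (starRingEnd ℂ) (w 0) * (upbV0 a * upbV1 b - upbV1 a * upbV0 b)
        = ((starRingEnd ℂ) (w 0) * upbV0 a + (starRingEnd ℂ) (w 1) * upbV1 a) * upbV1 b
          - ((starRingEnd ℂ) (w 0) * upbV0 b + (starRingEnd ℂ) (w 1) * upbV1 b) * upbV1 a := by
      ring
    rw [h1, h2] at e
    simp only [zero_mul, sub_zero] at e
    exact (mul_eq_zero.mp e).resolve_right hd
  have hc1 : (starRingEnd ℂ) (w 1) = 0 := by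
    have e : (starRingEnd ℂ) (w 1) * (upbV0 a * upbV1 b - upbV1 a * upbV0 b)
        = ((starRingEnd ℂ) (w 0) * upbV0 b + (starRingEnd ℂ) (w 1) * upbV1 b) * upbV0 a
          - ((starRingEnd ℂ) (w 0) * upbV0 a + (starRingEnd ℂ) (w 1) * upbV1 a) * upbV0 b := by
      ring
    rw [h1, h2] at e
    simp only [zero_mul, sub_zero] at e
    exact (mul_eq_zero.mp e).resolve_right hd
  have hw0 : w 0 = 0 := by
    have := congrArg (starRingEnd ℂ) hc0; simpa using this
  have hw1 : w 1 = 0 := by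
    have := congrArg (starRingEnd ℂ) hc1; simpa using this
  ext i
  fin_cases i
  · exact hw0
  · exact hw1

/-- Any two distinct states among the six are linearly independent. -/
lemma upb_indep (a b : Fin 6) (h : a ≠ b) :
    upbV0 a * upbV1 b - upbV1 a * upbV0 b ≠ 0 := by
  fin_cases a <;> fin_cases b <;>
    simp_all [Complex.ext_iff] <;> norm_num

/-- The index matrix of the size-10 four-qubit UPB. -/
def upbM : Fin 10 → Fin 4 → Fin 6 :=
  ![![1,4,1,2], ![1,2,0,1], ![4,3,2,3], ![0,5,1,2], ![0,2,0,5],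
    ![1,2,0,0], ![1,2,1,3], ![5,3,0,5], ![1,5,1,2], ![0,4,3,4]]

/-- there exists a 4-qubit UPB of size 10. -/
theorem exists_upb_10_4 :
    ∃ V : Fin 10 → Fin 4 → EuclideanSpace ℂ (Fin 2), IsUPB V := by
  refine ⟨fun p i => upbSt (upbM p i), ⟨fun p i => upbSt_ne_zero _, ?_⟩, by norm_num, ?_⟩
  · -- pairwise orthogonality
    have hdec : ∀ p q : Fin 10, p ≠ q → ∃ i : Fin 4, upbOrthB (upbM p i) (upbM q i) = true := by
      decide
    intro p q hpq
    obtain ⟨i, hi⟩ := hdec p q hpq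
    exact ⟨i, upb_orth_inner _ _ hi⟩
  · -- unextendibility
    rintro ⟨w, hw, hcov⟩
    choose f hf using hcov
    have key : ∀ p q : Fin 10, f p = f q → upbM p (f p) = upbM q (f q) := by
      intro p q hfeq
      by_contra hne
      have hq : ⟪w (f p), upbSt (upbM q (f q))⟫_ℂ = 0 := by
        rw [hfeq]; exact hf q
      exact hw (f p) (upb_two_orth _ _ _ (upb_indep _ _ hne) (hf p) hq)
    set c : Fin 4 → Option (Fin 6) :=
      fun i => if h : ∃ p, f p = i then some (upbM h.choose i) else none with hcdef
    have hc : ∀ p : Fin 10, c (f p) = some (upbM p (f p)) := by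
      intro p
      have h : ∃ q, f q = f p := ⟨p, rfl⟩
      simp only [hcdef, dif_pos h]
      congr 1
      have := key h.choose p h.choose_spec
      rw [h.choose_spec] at this
      exact this
    have hdec2 : ∀ c0 c1 c2 c3 : Option (Fin 6), ∃ p : Fin 10, ∀ i : Fin 4,
        ![c0, c1, c2, c3] i ≠ some (upbM p i) := by decide
    obtain ⟨p, hp⟩ := hdec2 (c 0) (c 1) (c 2) (c 3)
    have hm : ∀ i : Fin 4, (![c 0, c 1, c 2, c 3] : Fin 4 → Option (Fin 6)) i = c i := by
      intro i; fin_cases i <;> rfl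
    exact hp (f p) ((hm (f p)).trans (hc p))
end

section
/- For every m with 5 ≤ m ≤ 7 there is no 3-qubit unextendible product basis of size m: every pairwise orthogonal product family V : Fin m → Fin 3 → EuclideanSpace ℂ (Fin 2) with 5 ≤ m ≤ 7 is extendible. -/
open scoped InnerProductSpace

lemma rank_perp_one (x : EuclideanSpace ℂ (Fin 2)) (hx : x ≠ 0) :
    Module.finrank ℂ (ℂ ∙ x)ᗮ = 1 := by
  haveI : Fact (Module.finrank ℂ (EuclideanSpace ℂ (Fin 2)) = 1 + 1) := ⟨by simp⟩
  exact Submodule.finrank_orthogonal_span_singleton (n := 1) hx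

-- G2
lemma perp_perp {a b c : EuclideanSpace ℂ (Fin 2)} (ha : a ≠ 0) (hb : b ≠ 0)
    (hab : ⟪a, b⟫_ℂ = 0) (hac : ⟪a, c⟫_ℂ = 0) : ∃ t : ℂ, c = t • b := by
  have hbm : b ∈ (ℂ ∙ a)ᗮ := by
    rw [Submodule.mem_orthogonal]
    intro u hu
    obtain ⟨t, rfl⟩ := Submodule.mem_span_singleton.mp hu
    rw [inner_smul_left, hab, mul_zero]
  have hcm : c ∈ (ℂ ∙ a)ᗮ := by
    rw [Submodule.mem_orthogonal]
    intro u hu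
    obtain ⟨t, rfl⟩ := Submodule.mem_span_singleton.mp hu
    rw [inner_smul_left, hac, mul_zero]
  have hle : (ℂ ∙ b) ≤ (ℂ ∙ a)ᗮ := by
    rwa [Submodule.span_singleton_le_iff_mem]
  have heq : (ℂ ∙ b) = (ℂ ∙ a)ᗮ := by
    apply Submodule.eq_of_le_of_finrank_le hle
    rw [rank_perp_one a ha, finrank_span_singleton hb]
  rw [← heq] at hcm
  obtain ⟨t, ht⟩ := Submodule.mem_span_singleton.mp hcm
  exact ⟨t, ht.symm⟩

-- G1
lemma exists_perp (a : EuclideanSpace ℂ (Fin 2)) (ha : a ≠ 0) :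
    ∃ w : EuclideanSpace ℂ (Fin 2), w ≠ 0 ∧ ⟪w, a⟫_ℂ = 0 := by
  classical
  refine ⟨(WithLp.equiv 2 (Fin 2 → ℂ)).symm ![-(starRingEnd ℂ) (a 1), (starRingEnd ℂ) (a 0)], ?_, ?_⟩
  · intro h
    apply ha
    have h0 := congrFun (congrArg (WithLp.equiv 2 (Fin 2 → ℂ)) h) 0
    have h1 := congrFun (congrArg (WithLp.equiv 2 (Fin 2 → ℂ)) h) 1
    simp [Matrix.cons_val_zero, Matrix.cons_val_one] at h0 h1
    ext i
    fin_cases i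
    · simpa using h1
    · simpa using h0
  · rw [PiLp.inner_apply]
    rw [Fin.sum_univ_two]
    simp [RCLike.inner_apply]
    ring

/-- Abstract structure of one qubit coordinate: `R` is orthogonality,
`S` is parallelism among the local vectors. -/
structure QCoord (α : Type*) where
  R : α → α → Prop
  S : α → α → Prop
  rsym : ∀ {p q}, R p q → R q p
  rirr : ∀ p, ¬R p p
  srefl : ∀ p, S p p
  ssymm : ∀ {p q}, S p q → S q p
  strans : ∀ {p q r}, S p q → S q r → S p r
  sr : ∀ {p q r}, S p q → R p r → R q r
  snr : ∀ {p q}, S p q → ¬R p q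
  rrs : ∀ {p q r}, R p q → R p r → S q r

namespace QCoord

open Classical Finset

variable {α : Type*} [Fintype α] [DecidableEq α] (c : QCoord α)

noncomputable def N (p : α) : Finset α := univ.filter (fun q => c.R p q)
noncomputable def C (p : α) : Finset α := univ.filter (fun q => c.S p q)
noncomputable def blk (p : α) : Finset α := c.C p ∪ c.N p
noncomputable def deg (p : α) : ℕ := (c.N p).card

variable {c}

lemma mem_N {p q : α} : q ∈ c.N p ↔ c.R p q := by simp [N]
lemma mem_C {p q : α} : q ∈ c.C p ↔ c.S p q := by simp [C]
lemma self_mem_C (p : α) : p ∈ c.C p := mem_C.mpr (c.srefl p)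

lemma disj_CN (p : α) : Disjoint (c.C p) (c.N p) := by
  rw [Finset.disjoint_left]
  intro q hq hq'
  exact c.snr (mem_C.mp hq) (mem_N.mp hq')

lemma card_blk (p : α) : (c.blk p).card = (c.C p).card + (c.N p).card :=
  Finset.card_union_of_disjoint (disj_CN p)

lemma card_blk' (p : α) : (c.blk p).card = (c.C p).card + c.deg p :=
  card_blk p

lemma C_of_S {p q : α} (h : c.S p q) : c.C q = c.C p := by
  ext r; simp only [mem_C]
  exact ⟨fun hr => c.strans h hr, fun hr => c.strans (c.ssymm h) hr⟩

lemma N_of_S {p q : α} (h : c.S p q) : c.N q = c.N p := by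
  ext r; simp only [mem_N]
  exact ⟨fun hr => c.sr (c.ssymm h) hr, fun hr => c.sr h hr⟩

lemma C_of_R {p q : α} (h : c.R p q) : c.C q = c.N p := by
  ext r; simp only [mem_C, mem_N]
  constructor
  · intro hr
    have h1 : c.R q p := c.rsym h
    have h2 : c.R r p := c.sr hr h1
    exact c.rsym h2
  · intro hr
    exact c.rrs h hr

lemma N_of_R {p q : α} (h : c.R p q) : c.N q = c.C p := by
  ext r; simp only [mem_C, mem_N]
  constructor
  · intro hr
    exact c.rrs (c.rsym h) hr
  · intro hr
    have h2 : c.R r q := c.sr hr h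
    exact c.rsym h2

lemma mem_blk_self (p : α) : p ∈ c.blk p := Finset.mem_union_left _ (self_mem_C p)

lemma blk_of_mem {p q : α} (h : q ∈ c.blk p) : c.blk q = c.blk p := by
  rcases Finset.mem_union.mp h with h' | h'
  · rw [blk, blk, C_of_S (mem_C.mp h'), N_of_S (mem_C.mp h')]
  · rw [blk, blk, C_of_R (mem_N.mp h'), N_of_R (mem_N.mp h'), Finset.union_comm]

lemma blk_disj {p q : α} (h : q ∉ c.blk p) : Disjoint (c.blk q) (c.blk p) := by
  rw [Finset.disjoint_left]
  intro r hr hr'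
  have e1 : c.blk r = c.blk q := blk_of_mem hr
  have e2 : c.blk r = c.blk p := blk_of_mem hr'
  exact h (e2 ▸ e1 ▸ mem_blk_self q)

lemma deg_of_C {p q : α} (h : q ∈ c.C p) : c.deg q = c.deg p := by
  rw [deg, deg, N_of_S (mem_C.mp h)]

lemma deg_of_N {p q : α} (h : q ∈ c.N p) : c.deg q = (c.C p).card := by
  rw [deg, N_of_R (mem_N.mp h)]

lemma sum_blk_deg (p : α) :
    ∑ q ∈ c.blk p, c.deg q = 2 * ((c.C p).card * (c.N p).card) := by
  rw [blk, Finset.sum_union (disj_CN p)]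
  rw [Finset.sum_congr rfl (fun q hq => deg_of_C hq),
      Finset.sum_congr rfl (fun q hq => deg_of_N hq)]
  simp [Finset.sum_const, deg, smul_eq_mul]
  ring

lemma blk_closed_sdiff {U : Finset α} (hU : ∀ p ∈ U, c.blk p ⊆ U) {p : α}
    (hp : p ∈ U) : ∀ q ∈ U \ c.blk p, c.blk q ⊆ U \ c.blk p := by
  intro q hq
  rw [Finset.mem_sdiff] at hq
  intro r hr
  rw [Finset.mem_sdiff]
  refine ⟨hU q hq.1 hr, fun hr' => ?_⟩
  have e1 : c.blk r = c.blk q := blk_of_mem hr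
  have e2 : c.blk r = c.blk p := blk_of_mem hr'
  exact hq.2 (e2 ▸ e1 ▸ mem_blk_self q)

/-- Key counting bound: over a block-closed set, twice the degree sum
is at most the square of the cardinality. -/
lemma sumdeg (U : Finset α) (hU : ∀ p ∈ U, c.blk p ⊆ U) :
    2 * ∑ q ∈ U, c.deg q ≤ U.card ^ 2 := by
  induction U using Finset.strongInduction with
  | _ U ih =>
    rcases U.eq_empty_or_nonempty with rfl | ⟨p, hp⟩
    · simp
    · have hBsub : c.blk p ⊆ U := hU p hp
      have hsplit : ∑ q ∈ U \ c.blk p, c.deg q + ∑ q ∈ c.blk p, c.deg q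
          = ∑ q ∈ U, c.deg q := Finset.sum_sdiff hBsub
      have hssub : U \ c.blk p ⊂ U := by
        apply Finset.sdiff_ssubset hBsub
        exact ⟨p, mem_blk_self p⟩
      have hrec := ih (U \ c.blk p) hssub (blk_closed_sdiff hU hp)
      have hcard : (U \ c.blk p).card = U.card - (c.blk p).card :=
        Finset.card_sdiff_of_subset hBsub
      have hb := sum_blk_deg (c := c) p
      have hk : (c.blk p).card ≤ U.card := Finset.card_le_card hBsub
      set a := (c.C p).card
      set b := (c.N p).card
      have hab : (c.blk p).card = a + b := card_blk p
      -- arithmetic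
      have h4ab : 4 * (a * b) ≤ (a + b) ^ 2 := by
        zify; nlinarith [sq_nonneg ((a:ℤ) - b)]
      have hrest : 2 * ∑ q ∈ U \ c.blk p, c.deg q ≤ (U.card - (a + b)) ^ 2 := by
        rw [← hab, ← hcard]; exact hrec
      rw [← hsplit, hb]
      have hk' : a + b ≤ U.card := hab ▸ hk
      set r := U.card - (a + b) with hr
      have hu : U.card = r + (a + b) := by omega
      rw [hu]
      have h1 : 2 * (∑ q ∈ U \ c.blk p, c.deg q + 2 * (a * b))
          = 2 * ∑ q ∈ U \ c.blk p, c.deg q + 4 * (a * b) := by ring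
      rw [h1]
      calc 2 * ∑ q ∈ U \ c.blk p, c.deg q + 4 * (a * b)
          ≤ r ^ 2 + (a + b) ^ 2 := Nat.add_le_add hrest h4ab
        _ ≤ (r + (a + b)) ^ 2 := by nlinarith

lemma split_at (hNne : ∀ q : α, ∃ u, c.R q u) (p : α) :
    1 ≤ (c.C p).card ∧ 1 ≤ c.deg p ∧
      ∑ q, c.deg q = 2 * ((c.C p).card * c.deg p) + ∑ q ∈ Finset.univ \ c.blk p, c.deg q ∧
      2 * ∑ q ∈ Finset.univ \ c.blk p, c.deg q ≤ (Fintype.card α - ((c.C p).card + c.deg p)) ^ 2 := by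
  obtain ⟨u, hu⟩ := hNne p
  refine ⟨Finset.card_pos.mpr ⟨p, self_mem_C p⟩, Finset.card_pos.mpr ⟨u, mem_N.mpr hu⟩, ?_, ?_⟩
  · rw [← Finset.sum_sdiff (Finset.subset_univ (c.blk p)), sum_blk_deg p]
    show _ = 2 * ((c.C p).card * (c.N p).card) + _
    ring
  · have h := sumdeg (Finset.univ \ c.blk p) (by
      intro q hq
      exact blk_closed_sdiff (fun r _ => Finset.subset_univ _) (Finset.mem_univ p) q hq)
    rw [Finset.card_sdiff_of_subset (Finset.subset_univ _), Finset.card_univ, card_blk] at h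
    exact h

lemma rest_big (hNne : ∀ q : α, ∃ u, c.R q u) {p q : α} (hq : q ∉ c.blk p) :
    (c.C p).card + c.deg p + 2 ≤ Fintype.card α := by
  obtain ⟨u, hu⟩ := hNne q
  have huq : u ∈ c.blk q := Finset.mem_union_right _ (mem_N.mpr hu)
  have hdisj := blk_disj (c := c) hq
  have hun : u ∉ c.blk p := Finset.disjoint_left.mp hdisj huq
  have hne : q ≠ u := fun h => c.rirr q (h ▸ hu)
  have hsub : c.blk p ∪ {q, u} ⊆ Finset.univ := Finset.subset_univ _
  have hd : Disjoint (c.blk p) ({q, u} : Finset α) := by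
    rw [Finset.disjoint_right]
    intro r hr
    rcases Finset.mem_insert.mp hr with rfl | hr'
    · exact hq
    · rw [Finset.mem_singleton] at hr'; exact hr' ▸ hun
  have := Finset.card_le_card hsub
  rw [Finset.card_union_of_disjoint hd, Finset.card_univ, Finset.card_pair hne,
    card_blk] at this
  exact this

section Structure

variable (hNne : ∀ q : α, ∃ u, c.R q u) (hout : ∀ p : α, ∃ q, q ∉ c.blk p)

include hNne hout

lemma dichotomy7 (hcard : Fintype.card α = 7) (hsum : ∑ q, c.deg q = 14) (p : α) :
    ((c.C p).card = 1 ∧ c.deg p = 1) ∨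
      ((c.C p).card + c.deg p = 5 ∧ (c.C p).card = 3 ∧ c.deg p = 2) ∨
      ((c.C p).card + c.deg p = 5 ∧ (c.C p).card = 2 ∧ c.deg p = 3) := by
  obtain ⟨ha, hb, hsplit, hT⟩ := split_at hNne p
  obtain ⟨q, hq⟩ := hout p
  have hrb := rest_big hNne hq
  rw [hcard] at hrb hT
  rw [hsum] at hsplit
  set a := (c.C p).card with hadef
  set b := c.deg p with hbdef
  set T := ∑ q ∈ Finset.univ \ c.blk p, c.deg q with hTdef
  have hab5 : a + b ≤ 5 := by omega
  clear_value a b T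
  have hau : a ≤ 4 := by omega
  have hbu : b ≤ 4 := by omega
  interval_cases a <;> interval_cases b <;> norm_num at hT ⊢ <;> omega

lemma dichotomy6 (hcard : Fintype.card α = 6) (hsum : ∑ q, c.deg q = 10) (p : α) :
    ((c.C p).card = 1 ∧ c.deg p = 1) ∨ ((c.C p).card = 2 ∧ c.deg p = 2) := by
  obtain ⟨ha, hb, hsplit, hT⟩ := split_at hNne p
  obtain ⟨q, hq⟩ := hout p
  have hrb := rest_big hNne hq
  rw [hcard] at hrb hT
  rw [hsum] at hsplit
  set a := (c.C p).card with hadef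
  set b := c.deg p with hbdef
  set T := ∑ q ∈ Finset.univ \ c.blk p, c.deg q with hTdef
  have hab4 : a + b ≤ 4 := by omega
  clear_value a b T
  have hau : a ≤ 4 := by omega
  have hbu : b ≤ 4 := by omega
  interval_cases a <;> interval_cases b <;> norm_num at hT ⊢ <;> omega

lemma sum_deg_le5 (hcard : Fintype.card α = 5) : ∑ q, c.deg q ≤ 6 := by
  have hpos : 0 < Fintype.card α := by omega
  obtain ⟨p⟩ := Fintype.card_pos_iff.mp hpos
  obtain ⟨ha, hb, hsplit, hT⟩ := split_at hNne p
  obtain ⟨q, hq⟩ := hout p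
  have hrb := rest_big hNne hq
  rw [hcard] at hrb hT
  set a := (c.C p).card with hadef
  set b := c.deg p with hbdef
  set T := ∑ q ∈ Finset.univ \ c.blk p, c.deg q with hTdef
  have hab : a + b ≤ 3 := by omega
  clear_value a b T
  have hau : a ≤ 4 := by omega
  have hbu : b ≤ 4 := by omega
  rw [hsplit]
  interval_cases a <;> interval_cases b <;> norm_num at hT ⊢ <;> omega

lemma sum_deg_le6 (hcard : Fintype.card α = 6) : ∑ q, c.deg q ≤ 10 := by
  have hpos : 0 < Fintype.card α := by omega
  obtain ⟨p⟩ := Fintype.card_pos_iff.mp hpos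
  obtain ⟨ha, hb, hsplit, hT⟩ := split_at hNne p
  obtain ⟨q, hq⟩ := hout p
  have hrb := rest_big hNne hq
  rw [hcard] at hrb hT
  set a := (c.C p).card with hadef
  set b := c.deg p with hbdef
  set T := ∑ q ∈ Finset.univ \ c.blk p, c.deg q with hTdef
  have hab : a + b ≤ 4 := by omega
  clear_value a b T
  have hau : a ≤ 4 := by omega
  have hbu : b ≤ 4 := by omega
  rw [hsplit]
  interval_cases a <;> interval_cases b <;> norm_num at hT ⊢ <;> omega

lemma sum_deg_le7 (hcard : Fintype.card α = 7) : ∑ q, c.deg q ≤ 14 := by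
  have hpos : 0 < Fintype.card α := by omega
  obtain ⟨p⟩ := Fintype.card_pos_iff.mp hpos
  obtain ⟨ha, hb, hsplit, hT⟩ := split_at hNne p
  obtain ⟨q, hq⟩ := hout p
  have hrb := rest_big hNne hq
  rw [hcard] at hrb hT
  set a := (c.C p).card with hadef
  set b := c.deg p with hbdef
  set T := ∑ q ∈ Finset.univ \ c.blk p, c.deg q with hTdef
  have hab : a + b ≤ 5 := by omega
  clear_value a b T
  have hau : a ≤ 4 := by omega
  have hbu : b ≤ 4 := by omega
  rw [hsplit]
  interval_cases a <;> interval_cases b <;> norm_num at hT ⊢ <;> omega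

end Structure

section Structure2

variable (hNne : ∀ q : α, ∃ u, c.R q u) (hout : ∀ p : α, ∃ q, q ∉ c.blk p)

include hNne hout

lemma out_small7 (hcard : Fintype.card α = 7) (hsum : ∑ q, c.deg q = 14)
    {p₀ q : α} (h5 : (c.blk p₀).card = 5) (hq : q ∉ c.blk p₀) :
    c.deg q = 1 := by
  have hsub : c.blk q ⊆ Finset.univ \ c.blk p₀ := by
    intro r hr
    rw [Finset.mem_sdiff]
    exact ⟨Finset.mem_univ r, Finset.disjoint_left.mp (blk_disj hq) hr⟩
  have hle : (c.blk q).card ≤ 2 := by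
    have := Finset.card_le_card hsub
    rw [Finset.card_sdiff_of_subset (Finset.subset_univ _), Finset.card_univ, hcard, h5] at this
    exact this
  rw [card_blk'] at hle
  rcases dichotomy7 hNne hout hcard hsum q with ⟨_, h⟩ | ⟨h, _⟩ | ⟨h, _⟩
  · exact h
  · omega
  · omega

lemma struct7 (hcard : Fintype.card α = 7) (hsum : ∑ q, c.deg q = 14) :
    (∀ p, 1 ≤ c.deg p ∧ c.deg p ≤ 3) ∧ (∃ p, c.deg p = 2) ∧
      (∀ p q, c.deg p = 2 → c.deg q = 2 → c.S p q) := by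
  have hdico := dichotomy7 hNne hout hcard hsum
  have hbounds : ∀ p, 1 ≤ c.deg p ∧ c.deg p ≤ 3 := by
    intro p
    rcases hdico p with ⟨_, h⟩ | ⟨_, _, h⟩ | ⟨_, _, h⟩ <;> omega
  -- there exists a point with a big block
  have hbig : ∃ p₀, (c.blk p₀).card = 5 ∧ ((c.C p₀).card = 3 ∧ c.deg p₀ = 2 ∨
      (c.C p₀).card = 2 ∧ c.deg p₀ = 3) := by
    by_contra hno
    push_neg at hno
    have hall : ∀ p, c.deg p = 1 := by
      intro p
      rcases hdico p with ⟨_, h⟩ | ⟨h5, h3, h2⟩ | ⟨h5, h2, h3⟩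
      · exact h
      · exact absurd h2 ((hno p (by rw [card_blk']; omega)).1 h3)
      · exact absurd h3 ((hno p (by rw [card_blk']; omega)).2 h2)
    rw [Finset.sum_congr rfl (fun q _ => hall q)] at hsum
    simp [Finset.card_univ, hcard] at hsum
  obtain ⟨p₀, h5, hcase⟩ := hbig
  refine ⟨hbounds, ?_, ?_⟩
  · rcases hcase with ⟨h3, h2⟩ | ⟨h2, h3⟩
    · exact ⟨p₀, h2⟩
    · obtain ⟨u, hu⟩ := hNne p₀
      refine ⟨u, ?_⟩
      rw [deg_of_N (mem_N.mpr hu), h2]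
  · -- deg-2 points are exactly one side of the big block, pairwise parallel
    have hmem : ∀ q, c.deg q = 2 → q ∈ c.blk p₀ := by
      intro q h2q
      by_contra hq
      rw [out_small7 hNne hout hcard hsum h5 hq] at h2q
      omega
    rcases hcase with ⟨h3, h2⟩ | ⟨h2, h3⟩
    · -- C side has deg 2, N side has deg 3
      have hC : ∀ q, c.deg q = 2 → q ∈ c.C p₀ := by
        intro q h2q
        rcases Finset.mem_union.mp (hmem q h2q) with h | h
        · exact h
        · rw [deg_of_N h, h3] at h2q; omega
      intro p q hp hq
      exact c.strans (c.ssymm (mem_C.mp (hC p hp))) (mem_C.mp (hC q hq))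
    · -- N side has deg 2, C side has deg 3
      have hN : ∀ q, c.deg q = 2 → q ∈ c.N p₀ := by
        intro q h2q
        rcases Finset.mem_union.mp (hmem q h2q) with h | h
        · rw [deg_of_C h, h3] at h2q; omega
        · exact h
      intro p q hp hq
      exact c.rrs (mem_N.mp (hN p hp)) (mem_N.mp (hN q hq))

lemma struct6 (hcard : Fintype.card α = 6) (hsum : ∑ q, c.deg q = 10) :
    (∀ p, 1 ≤ c.deg p ∧ c.deg p ≤ 2) ∧
      (∃ u v : α, u ≠ v ∧ c.R u v ∧ (∀ w, c.deg w = 1 ↔ (w = u ∨ w = v))) ∧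
      (∀ p q, c.deg p = 2 → c.deg q = 2 → ¬c.R p q → c.S p q) := by
  have hdico := dichotomy6 hNne hout hcard hsum
  have hbounds : ∀ p, 1 ≤ c.deg p ∧ c.deg p ≤ 2 := by
    intro p
    rcases hdico p with ⟨_, h⟩ | ⟨_, h⟩ <;> omega
  have hbig : ∃ p₀, (c.C p₀).card = 2 ∧ c.deg p₀ = 2 := by
    by_contra hno
    push_neg at hno
    have hall : ∀ p, c.deg p = 1 := by
      intro p
      rcases hdico p with ⟨_, h⟩ | ⟨h2, h2'⟩
      · exact h
      · exact absurd h2' (hno p h2)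
    rw [Finset.sum_congr rfl (fun q _ => hall q)] at hsum
    simp [Finset.card_univ, hcard] at hsum
  obtain ⟨p₀, ha2, hb2⟩ := hbig
  have h4 : (c.blk p₀).card = 4 := by rw [card_blk', ha2, hb2]
  have hout_small : ∀ q, q ∉ c.blk p₀ → c.deg q = 1 := by
    intro q hq
    have hsub : c.blk q ⊆ Finset.univ \ c.blk p₀ := by
      intro r hr
      rw [Finset.mem_sdiff]
      exact ⟨Finset.mem_univ r, Finset.disjoint_left.mp (blk_disj hq) hr⟩
    have hle : (c.blk q).card ≤ 2 := by
      have := Finset.card_le_card hsub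
      rw [Finset.card_sdiff_of_subset (Finset.subset_univ _), Finset.card_univ, hcard, h4] at this
      exact this
    rw [card_blk'] at hle
    rcases hdico q with ⟨_, h⟩ | ⟨h2, h2'⟩
    · exact h
    · omega
  have hin_two : ∀ q, q ∈ c.blk p₀ → c.deg q = 2 := by
    intro q hq
    rcases Finset.mem_union.mp hq with h | h
    · rw [deg_of_C h]; exact hb2
    · rw [deg_of_N h]; exact ha2
  -- the two remaining points
  have hrest_card : (Finset.univ \ c.blk p₀).card = 2 := by
    rw [Finset.card_sdiff_of_subset (Finset.subset_univ _), Finset.card_univ, hcard, h4]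
  obtain ⟨u, v, huv, hrest⟩ := Finset.card_eq_two.mp hrest_card
  have hu_out : u ∉ c.blk p₀ := by
    have : u ∈ Finset.univ \ c.blk p₀ := by rw [hrest]; simp
    exact (Finset.mem_sdiff.mp this).2
  have hv_out : v ∉ c.blk p₀ := by
    have : v ∈ Finset.univ \ c.blk p₀ := by rw [hrest]; simp
    exact (Finset.mem_sdiff.mp this).2
  have hRuv : c.R u v := by
    obtain ⟨w, hw⟩ := hNne u
    have hw_blk : w ∈ c.blk u := Finset.mem_union_right _ (mem_N.mpr hw)
    have hw_rest : w ∈ Finset.univ \ c.blk p₀ := by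
      rw [Finset.mem_sdiff]
      exact ⟨Finset.mem_univ w, Finset.disjoint_left.mp (blk_disj hu_out) hw_blk⟩
    rw [hrest] at hw_rest
    rcases Finset.mem_insert.mp hw_rest with h | hw'
    · rw [h] at hw; exact absurd hw (c.rirr u)
    · rw [Finset.mem_singleton] at hw'; exact hw' ▸ hw
  refine ⟨hbounds, ⟨u, v, huv, hRuv, ?_⟩, ?_⟩
  · intro w
    constructor
    · intro h1
      by_contra hcon
      push_neg at hcon
      have hw_in : w ∈ c.blk p₀ := by
        by_contra hw_out
        have : w ∈ Finset.univ \ c.blk p₀ := by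
          rw [Finset.mem_sdiff]; exact ⟨Finset.mem_univ w, hw_out⟩
        rw [hrest] at this
        rcases Finset.mem_insert.mp this with rfl | h'
        · exact hcon.1 rfl
        · rw [Finset.mem_singleton] at h'; exact hcon.2 h'
      rw [hin_two w hw_in] at h1; omega
    · rintro (rfl | rfl)
      · exact hout_small w hu_out
      · exact hout_small w hv_out
  · intro p q hp hq hnR
    have hp_in : p ∈ c.blk p₀ := by
      by_contra h; rw [hout_small p h] at hp; omega
    have hq_in : q ∈ c.blk p₀ := by
      by_contra h; rw [hout_small q h] at hq; omega
    rcases Finset.mem_union.mp hp_in with h1 | h1 <;>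
      rcases Finset.mem_union.mp hq_in with h2 | h2
    · exact c.strans (c.ssymm (mem_C.mp h1)) (mem_C.mp h2)
    · -- p parallel to p₀, q orthogonal to p₀: then R p q, contradiction
      exfalso
      exact hnR (c.sr (mem_C.mp h1) (mem_N.mp h2))
    · exfalso
      exact hnR (c.rsym (c.sr (mem_C.mp h2) (mem_N.mp h1)))
    · exact c.rrs (mem_N.mp h1) (mem_N.mp h2)

end Structure2

end QCoord

namespace UPB3

open QCoord Finset

variable {m : ℕ} (c : Fin 3 → QCoord (Fin m))

/-- Fin 3 helper facts -/
lemma fin3_pigeon (i a b d : Fin 3) (ha : a ≠ i) (hb : b ≠ i) (hd : d ≠ i) :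
    a = b ∨ a = d ∨ b = d := by revert i a b d; decide

lemma fin3_third (i l : Fin 3) (h : i ≠ l) : ∃ t : Fin 3, t ≠ i ∧ t ≠ l := by
  revert i l; decide

lemma fin3_cases : ∀ (i j k l : Fin 3), i ≠ j → k ≠ i → k ≠ j → (l = i ∨ l = j ∨ l = k) := by
  decide

lemma fin3_add1 : ∀ i : Fin 3, i + 1 ≠ i := by decide
lemma fin3_add2 : ∀ i : Fin 3, i + 2 ≠ i := by decide
lemma fin3_add21 : ∀ i : Fin 3, i + 2 ≠ i + 1 := by decide

section NC

variable (hpair : ∀ p q : Fin m, p ≠ q → ∃ i, (c i).R p q)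
  (hnc : ¬ ∃ q : Fin 3 → Fin m, ∀ p, ∃ i, (c i).S (q i) p)

include hpair hnc

lemma nbr_nonempty (i : Fin 3) (p : Fin m) : ∃ u, (c i).R p u := by
  by_contra hno
  push_neg at hno
  classical
  apply hnc
  refine ⟨fun j => if j = i then p else
    (if h' : ∃ u, (c j).R p u then h'.choose else p), fun v => ?_⟩
  by_cases hvp : v = p
  · exact ⟨i, by simp [hvp, (c i).srefl]⟩
  · obtain ⟨l, hl⟩ := hpair p v (Ne.symm hvp)
    have hli : l ≠ i := by
      intro h
      exact hno v (h ▸ hl)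
    refine ⟨l, ?_⟩
    have hex : ∃ u, (c l).R p u := ⟨v, hl⟩
    simp only [if_neg hli, dif_pos hex]
    exact (c l).rrs hex.choose_spec hl

lemma out_exists (i : Fin 3) (p : Fin m) (hm : Fintype.card (Fin m) ≤ 7)
    (hm5 : 5 ≤ m) : ∃ q, q ∉ (c i).blk p := by
  by_contra hno
  push_neg at hno
  classical
  -- every point is in the block of p at coordinate i
  -- helper: if the N-side of some point r (whose block is everything) has ≤ 3
  -- elements, we can cover.
  have main : ∀ r : Fin m, (∀ q, q ∈ (c i).blk r) → ((c i).N r).card ≤ 3 → False := by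
    intro r hall hcard
    have hAcov : ∀ v : Fin m, v ∉ (c i).N r → (c i).S r v := by
      intro v hv
      rcases Finset.mem_union.mp (hall v) with h | h
      · exact mem_C.mp h
      · exact absurd h hv
    interval_cases hB : ((c i).N r).card
    · -- empty: everything parallel to r
      apply hnc
      exact ⟨fun _ => r, fun v => ⟨i, hAcov v (by simp [Finset.card_eq_zero.mp hB])⟩⟩
    · obtain ⟨b, hb⟩ := Finset.card_eq_one.mp hB
      apply hnc
      have h1i : i + 1 ≠ i := fin3_add1 i
      refine ⟨fun j => if j = i then r else b, fun v => ?_⟩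
      by_cases hv : v ∈ (c i).N r
      · rw [hb, Finset.mem_singleton] at hv
        exact ⟨i + 1, by simp [if_neg h1i, hv, (c (i+1)).srefl]⟩
      · exact ⟨i, by simp [hAcov v hv]⟩
    · obtain ⟨b₁, b₂, hbne, hb⟩ := Finset.card_eq_two.mp hB
      apply hnc
      have h1i : i + 1 ≠ i := fin3_add1 i
      have h2i : i + 2 ≠ i := fin3_add2 i
      have h21 : i + 2 ≠ i + 1 := fin3_add21 i
      refine ⟨fun j => if j = i then r else if j = i + 1 then b₁ else b₂, fun v => ?_⟩
      by_cases hv : v ∈ (c i).N r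
      · rw [hb] at hv
        rcases Finset.mem_insert.mp hv with h | h
        · exact ⟨i + 1, by simp [if_neg h1i, h, (c (i+1)).srefl]⟩
        · rw [Finset.mem_singleton] at h
          exact ⟨i + 2, by simp [if_neg h2i, if_neg h21, h, (c (i+2)).srefl]⟩
      · exact ⟨i, by simp [hAcov v hv]⟩
    · obtain ⟨x, y, z, hxy, hxz, hyz, hb⟩ := Finset.card_eq_three.mp hB
      have hx : (c i).R r x := mem_N.mp (by rw [hb]; simp)
      have hy : (c i).R r y := mem_N.mp (by rw [hb]; simp)
      have hz : (c i).R r z := mem_N.mp (by rw [hb]; simp)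
      -- pairs within {x,y,z} are not related at coordinate i
      have hnxy : ¬ (c i).R x y := (c i).snr ((c i).rrs hx hy)
      have hnxz : ¬ (c i).R x z := (c i).snr ((c i).rrs hx hz)
      have hnyz : ¬ (c i).R y z := (c i).snr ((c i).rrs hy hz)
      obtain ⟨l1, hl1⟩ := hpair x y hxy
      obtain ⟨l2, hl2⟩ := hpair x z hxz
      obtain ⟨l3, hl3⟩ := hpair y z hyz
      have hl1i : l1 ≠ i := fun h => hnxy (h ▸ hl1)
      have hl2i : l2 ≠ i := fun h => hnxz (h ▸ hl2)
      have hl3i : l3 ≠ i := fun h => hnyz (h ▸ hl3)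
      -- build a cover: at coordinate i pick r (covers everything outside
      -- {x,y,z}); at coordinate l cover two of x,y,z; the third coordinate
      -- covers the remaining point.
      have build : ∀ (l : Fin 3) (a b₁ b₂ : Fin m), l ≠ i → (c l).S b₁ b₂ →
          ({x, y, z} : Finset (Fin m)) ⊆ {a, b₁, b₂} → False := by
        intro l a b₁ b₂ hli hS hsub
        obtain ⟨t, hti, htl⟩ := fin3_third i l (Ne.symm hli)
        apply hnc
        refine ⟨fun j => if j = i then r else if j = l then b₁ else a, fun v => ?_⟩
        by_cases hv : v ∈ (c i).N r
        · have : v ∈ ({a, b₁, b₂} : Finset (Fin m)) := hsub (by rw [← hb]; exact hv)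
          rcases Finset.mem_insert.mp this with h | h
          · refine ⟨t, ?_⟩
            simp only [if_neg hti, if_neg htl]
            rw [h]; exact (c t).srefl a
          · rcases Finset.mem_insert.mp h with h' | h'
            · refine ⟨l, ?_⟩
              simp only [if_neg hli, if_pos rfl]
              rw [h']; exact (c l).srefl b₁
            · rw [Finset.mem_singleton] at h'
              refine ⟨l, ?_⟩
              simp only [if_neg hli, if_pos rfl]
              rw [h']; exact hS
        · exact ⟨i, by simp [hAcov v hv]⟩
      rcases fin3_pigeon i l1 l2 l3 hl1i hl2i hl3i with h | h | h
      · -- R l1 x y and R l1 x z : y and z parallel at l1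
        have hS : (c l1).S y z := (c l1).rrs hl1 (h ▸ hl2)
        exact build l1 x y z hl1i hS (by intro w hw; simp only [Finset.mem_insert, Finset.mem_singleton] at hw ⊢; tauto)
      · -- R l1 x y and R l1 y z : x and z parallel at l1
        have hS : (c l1).S x z := (c l1).rrs ((c l1).rsym hl1) (h ▸ hl3)
        exact build l1 y x z hl1i hS (by intro w hw; simp only [Finset.mem_insert, Finset.mem_singleton] at hw ⊢; tauto)
      · -- R l2 x z and R l2 y z : x and y parallel at l2
        have hS : (c l2).S x y := (c l2).rrs ((c l2).rsym hl2) ((c l2).rsym (h ▸ hl3))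
        exact build l2 z x y hl2i hS (by intro w hw; simp only [Finset.mem_insert, Finset.mem_singleton] at hw ⊢; tauto)
  -- now split on which side is small
  have hcardm : ((c i).C p).card + ((c i).N p).card = m := by
    have : (c i).blk p = Finset.univ := Finset.eq_univ_of_forall (hno)
    rw [← card_blk, this, Finset.card_univ, Fintype.card_fin]
  rw [Fintype.card_fin] at hm
  by_cases hsmall : ((c i).N p).card ≤ 3
  · exact main p hno hsmall
  · -- the C side is small; move to a point of the N side
    obtain ⟨u, hu⟩ := nbr_nonempty c hpair hnc i p
    have huN : u ∈ (c i).N p := mem_N.mpr hu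
    have hblk : (c i).blk u = (c i).blk p := blk_of_mem (Finset.mem_union_right _ huN)
    have hNu : (c i).N u = (c i).C p := N_of_R hu
    apply main u (fun q => hblk ▸ hno q)
    rw [hNu]
    omega

end NC

end UPB3

namespace UPB3

open QCoord Finset

variable {m : ℕ} (c : Fin 3 → QCoord (Fin m))

lemma sum3 (f : Fin 3 → ℕ) (i j k : Fin 3) (hij : i ≠ j) (hik : i ≠ k) (hjk : j ≠ k) :
    ∑ l, f l = f i + f j + f k := by
  have huniv : ({i, j, k} : Finset (Fin 3)) = Finset.univ := by
    apply Finset.eq_univ_of_card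
    rw [Finset.card_insert_of_notMem (by simp [hij, hik]),
      Finset.card_insert_of_notMem (by simp [hjk]), Finset.card_singleton]
    simp
  rw [← huniv, Finset.sum_insert (by simp [hij, hik]),
    Finset.sum_insert (by simp [hjk]), Finset.sum_singleton]
  ring

section Counting

variable (hpair : ∀ p q : Fin m, p ≠ q → ∃ i, (c i).R p q)

include hpair

lemma pointwise_lb (p : Fin m) : m - 1 ≤ ∑ i, (c i).deg p := by
  classical
  have hsub : Finset.univ.erase p ⊆ Finset.univ.biUnion (fun i => (c i).N p) := by
    intro v hv
    obtain ⟨l, hl⟩ := hpair p v (Ne.symm (Finset.ne_of_mem_erase hv))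
    exact Finset.mem_biUnion.mpr ⟨l, Finset.mem_univ l, mem_N.mpr hl⟩
  calc m - 1 = (Finset.univ.erase p).card := by
        rw [Finset.card_erase_of_mem (Finset.mem_univ p), Finset.card_univ, Fintype.card_fin]
    _ ≤ (Finset.univ.biUnion (fun i => (c i).N p)).card := Finset.card_le_card hsub
    _ ≤ ∑ i, ((c i).N p).card := Finset.card_biUnion_le
    _ = ∑ i, (c i).deg p := rfl

lemma total_lb : m * (m - 1) ≤ ∑ i, ∑ p, (c i).deg p := by
  classical
  have := Finset.sum_le_sum (fun p (_ : p ∈ (Finset.univ : Finset (Fin m))) =>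
    pointwise_lb c hpair p)
  calc m * (m - 1) = ∑ _p : Fin m, (m - 1) := by
        rw [Finset.sum_const, Finset.card_univ, Fintype.card_fin, smul_eq_mul]
    _ ≤ ∑ p, ∑ i, (c i).deg p := this
    _ = ∑ i, ∑ p, (c i).deg p := Finset.sum_comm

-- if the pointwise sum is exactly m-1, each pair is related at exactly one coordinate
lemma exactly_once {p v : Fin m} (hpv : p ≠ v)
    (hpt : ∑ i, (c i).deg p = m - 1) {i j : Fin 3} (hij : i ≠ j)
    (hRi : (c i).R p v) (hRj : (c j).R p v) : False := by
  classical
  obtain ⟨k, hki, hkj⟩ := fin3_third i j hij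
  have hm1 : 1 ≤ m := by
    rcases Nat.eq_zero_or_pos m with h | h
    · exact absurd (Fin.pos p) (by omega)
    · omega
  -- the union of the three neighborhoods is contained in univ.erase p
  have hsub : ((c i).N p ∪ (c j).N p) ∪ (c k).N p ⊆ Finset.univ.erase p := by
    intro w hw
    have hw' : (c i).R p w ∨ (c j).R p w ∨ (c k).R p w := by
      rcases Finset.mem_union.mp hw with h | h
      · rcases Finset.mem_union.mp h with h' | h'
        · exact Or.inl (mem_N.mp h')
        · exact Or.inr (Or.inl (mem_N.mp h'))
      · exact Or.inr (Or.inr (mem_N.mp h))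
    refine Finset.mem_erase.mpr ⟨?_, Finset.mem_univ w⟩
    intro hwp
    subst hwp
    rcases hw' with h | h | h <;> exact (c _).rirr _ h
  have hcard_le : ((c i).N p ∪ (c j).N p ∪ (c k).N p).card ≤ m - 1 := by
    have := Finset.card_le_card hsub
    rwa [Finset.card_erase_of_mem (Finset.mem_univ p), Finset.card_univ,
      Fintype.card_fin] at this
  -- but the erase is contained in the union too, so the union has card m-1
  have hsub2 : Finset.univ.erase p ⊆ ((c i).N p ∪ (c j).N p) ∪ (c k).N p := by
    intro w hw
    obtain ⟨l, hl⟩ := hpair p w (Ne.symm (Finset.ne_of_mem_erase hw))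
    rcases fin3_cases i j k l hij hki hkj with rfl | rfl | rfl
    · exact Finset.mem_union_left _ (Finset.mem_union_left _ (mem_N.mpr hl))
    · exact Finset.mem_union_left _ (Finset.mem_union_right _ (mem_N.mpr hl))
    · exact Finset.mem_union_right _ (mem_N.mpr hl)
  have hcard_eq : ((c i).N p ∪ (c j).N p ∪ (c k).N p).card = m - 1 := by
    have := Finset.card_le_card hsub2
    rw [Finset.card_erase_of_mem (Finset.mem_univ p), Finset.card_univ,
      Fintype.card_fin] at this
    omega
  -- v is in both N i p and N j p
  have hinter : 1 ≤ ((c i).N p ∩ (c j).N p).card :=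
    Finset.card_pos.mpr ⟨v, Finset.mem_inter.mpr ⟨mem_N.mpr hRi, mem_N.mpr hRj⟩⟩
  have h1 : ((c i).N p ∪ (c j).N p).card + (((c i).N p ∩ (c j).N p)).card
      = ((c i).N p).card + ((c j).N p).card := Finset.card_union_add_card_inter _ _
  have h2 : ((c i).N p ∪ (c j).N p ∪ (c k).N p).card
      ≤ ((c i).N p ∪ (c j).N p).card + ((c k).N p).card := Finset.card_union_le _ _
  have h3 : ∑ l, (c l).deg p = (c i).deg p + (c j).deg p + (c k).deg p :=
    sum3 _ i j k hij (Ne.symm hki) (Ne.symm hkj)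
  rw [hpt] at h3
  simp only [deg] at h3
  omega

end Counting

end UPB3

namespace UPB3

open QCoord Finset

lemma fin3_p1 : ∀ j : Fin 3, j + 2 + 1 = j := by decide
lemma fin3_ne1 : ∀ j : Fin 3, j ≠ j + 1 := by decide
lemma fin3_ne2 : ∀ j : Fin 3, j ≠ j + 2 := by decide
lemma fin3_ne12 : ∀ j : Fin 3, j + 1 ≠ j + 2 := by decide

section Endgames

lemma endgame5 (c : Fin 3 → QCoord (Fin 5))
    (hpair : ∀ p q : Fin 5, p ≠ q → ∃ i, (c i).R p q)
    (hnc : ¬ ∃ q : Fin 3 → Fin 5, ∀ p, ∃ i, (c i).S (q i) p) : False := by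
  have hNne : ∀ i, ∀ q : Fin 5, ∃ u, (c i).R q u := fun i q => nbr_nonempty c hpair hnc i q
  have hout : ∀ i, ∀ p : Fin 5, ∃ q, q ∉ (c i).blk p :=
    fun i p => out_exists c hpair hnc i p (by simp) (by norm_num)
  have hb : ∀ i, ∑ p, (c i).deg p ≤ 6 :=
    fun i => sum_deg_le5 (hNne i) (hout i) (by simp)
  have ht := total_lb c hpair
  rw [Fin.sum_univ_three] at ht
  have h0 := hb 0; have h1 := hb 1; have h2 := hb 2
  norm_num at ht
  omega

lemma endgame7 (c : Fin 3 → QCoord (Fin 7))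
    (hpair : ∀ p q : Fin 7, p ≠ q → ∃ i, (c i).R p q)
    (hnc : ¬ ∃ q : Fin 3 → Fin 7, ∀ p, ∃ i, (c i).S (q i) p) : False := by
  have hNne : ∀ i, ∀ q : Fin 7, ∃ u, (c i).R q u := fun i q => nbr_nonempty c hpair hnc i q
  have hout : ∀ i, ∀ p : Fin 7, ∃ q, q ∉ (c i).blk p :=
    fun i p => out_exists c hpair hnc i p (by simp) (by norm_num)
  have hb : ∀ i, ∑ p, (c i).deg p ≤ 14 :=
    fun i => sum_deg_le7 (hNne i) (hout i) (by simp)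
  have ht := total_lb c hpair
  rw [Fin.sum_univ_three] at ht
  norm_num at ht
  have hS : ∀ i, ∑ p, (c i).deg p = 14 := by
    have h0 := hb 0; have h1 := hb 1; have h2 := hb 2
    intro i
    rcases fin3_cases 0 1 2 i (by decide) (by decide) (by decide) with rfl | rfl | rfl <;> omega
  have hstruct := fun i => struct7 (hNne i) (hout i) (by simp) (hS i)
  choose w hw using fun i => (hstruct i).2.1
  -- pointwise equality
  have htot : ∑ p : Fin 7, ∑ i, (c i).deg p = 42 := by
    rw [Finset.sum_comm]
    rw [Fin.sum_univ_three, hS 0, hS 1, hS 2]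
  have hpt : ∀ p : Fin 7, ∑ i, (c i).deg p = 6 := by
    intro p
    by_contra hne
    have hge : ∀ q : Fin 7, 6 ≤ ∑ i, (c i).deg q := by
      intro q
      have := pointwise_lb c hpair q
      norm_num at this
      exact this
    have hlt : (6 : ℕ) < ∑ i, (c i).deg p := lt_of_le_of_ne (hge p) (fun h => hne h.symm)
    have := Finset.sum_lt_sum (f := fun _ : Fin 7 => (6:ℕ)) (g := fun q => ∑ i, (c i).deg q)
      (fun q _ => hge q) ⟨p, Finset.mem_univ p, hlt⟩
    rw [htot] at this
    simp at this
  -- every point has a coordinate of degree two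
  have h2 : ∀ p : Fin 7, ∃ i, (c i).deg p = 2 := by
    intro p
    have hp := hpt p
    rw [Fin.sum_univ_three] at hp
    have b0 := (hstruct 0).1 p
    have b1 := (hstruct 1).1 p
    have b2 := (hstruct 2).1 p
    by_cases e0 : (c 0).deg p = 2
    · exact ⟨0, e0⟩
    by_cases e1 : (c 1).deg p = 2
    · exact ⟨1, e1⟩
    by_cases e2 : (c 2).deg p = 2
    · exact ⟨2, e2⟩
    omega
  apply hnc
  refine ⟨fun i => w i, fun p => ?_⟩
  obtain ⟨i, hi⟩ := h2 p
  exact ⟨i, (hstruct i).2.2 (w i) p (hw i) hi⟩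

lemma endgame6 (c : Fin 3 → QCoord (Fin 6))
    (hpair : ∀ p q : Fin 6, p ≠ q → ∃ i, (c i).R p q)
    (hnc : ¬ ∃ q : Fin 3 → Fin 6, ∀ p, ∃ i, (c i).S (q i) p) : False := by
  have hNne : ∀ i, ∀ q : Fin 6, ∃ u, (c i).R q u := fun i q => nbr_nonempty c hpair hnc i q
  have hout : ∀ i, ∀ p : Fin 6, ∃ q, q ∉ (c i).blk p :=
    fun i p => out_exists c hpair hnc i p (by simp) (by norm_num)
  have hb : ∀ i, ∑ p, (c i).deg p ≤ 10 :=
    fun i => sum_deg_le6 (hNne i) (hout i) (by simp)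
  have ht := total_lb c hpair
  rw [Fin.sum_univ_three] at ht
  norm_num at ht
  have hS : ∀ i, ∑ p, (c i).deg p = 10 := by
    have h0 := hb 0; have h1 := hb 1; have h2 := hb 2
    intro i
    rcases fin3_cases 0 1 2 i (by decide) (by decide) (by decide) with rfl | rfl | rfl <;> omega
  have hstruct := fun i => struct6 (hNne i) (hout i) (by simp) (hS i)
  choose u v hne hR hchar using fun i => (hstruct i).2.1
  have hbounds : ∀ i p, 1 ≤ (c i).deg p ∧ (c i).deg p ≤ 2 := fun i => (hstruct i).1
  have hS2 := fun i => (hstruct i).2.2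
  have htot : ∑ p : Fin 6, ∑ i, (c i).deg p = 30 := by
    rw [Finset.sum_comm]
    rw [Fin.sum_univ_three, hS 0, hS 1, hS 2]
  have hpt : ∀ p : Fin 6, ∑ i, (c i).deg p = 5 := by
    intro p
    by_contra hne'
    have hge : ∀ q : Fin 6, 5 ≤ ∑ i, (c i).deg q := by
      intro q
      have := pointwise_lb c hpair q
      norm_num at this
      exact this
    have hlt : (5 : ℕ) < ∑ i, (c i).deg p := lt_of_le_of_ne (hge p) (fun h => hne' h.symm)
    have := Finset.sum_lt_sum (f := fun _ : Fin 6 => (5:ℕ)) (g := fun q => ∑ i, (c i).deg q)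
      (fun q _ => hge q) ⟨p, Finset.mem_univ p, hlt⟩
    rw [htot] at this
    simp at this
  -- every point has exactly one coordinate of degree one, and degree two at
  -- the other two coordinates
  have hdeg2 : ∀ (j : Fin 3) (p : Fin 6), (c j).deg p = 1 →
      ∀ l, l ≠ j → (c l).deg p = 2 := by
    intro j p h1 l hl
    have hp := hpt p
    have hsum : (c j).deg p + (c (j+1)).deg p + (c (j+2)).deg p = 5 := by
      have h := sum3 (fun l => (c l).deg p) j (j+1) (j+2)
        (fin3_ne1 j) (fin3_ne2 j) (fin3_ne12 j)
      rw [hp] at h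
      exact h.symm
    have hb1 := hbounds (j+1) p
    have hb2 := hbounds (j+2) p
    rcases fin3_cases (j+1) (j+2) j l (fin3_ne12 j) (fin3_ne1 j) (fin3_ne2 j)
        with rfl | rfl | rfl
    · omega
    · omega
    · exact absurd rfl hl
  apply hnc
  refine ⟨fun i => u (i + 1), fun p => ?_⟩
  -- find the coordinate where p has degree one
  have hj : ∃ j, (c j).deg p = 1 := by
    have hp := hpt p
    rw [Fin.sum_univ_three] at hp
    have b0 := hbounds 0 p
    have b1 := hbounds 1 p
    have b2 := hbounds 2 p
    by_cases e0 : (c 0).deg p = 1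
    · exact ⟨0, e0⟩
    by_cases e1 : (c 1).deg p = 1
    · exact ⟨1, e1⟩
    by_cases e2 : (c 2).deg p = 1
    · exact ⟨2, e2⟩
    omega
  obtain ⟨j, hdj⟩ := hj
  refine ⟨j + 2, ?_⟩
  show (c (j+2)).S (u (j + 2 + 1)) p
  rw [fin3_p1 j]
  -- p is one of the two special points of coordinate j
  rcases (hchar j p).mp hdj with hp1 | hp2
  · rw [hp1]
    exact (c (j+2)).srefl (u j)
  · -- p = v j
    rw [hp2]
    have hdj' : (c j).deg (v j) = 1 := by rw [← hp2]; exact hdj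
    have hduj : (c j).deg (u j) = 1 := (hchar j (u j)).mpr (Or.inl rfl)
    have hd2u : (c (j+2)).deg (u j) = 2 := hdeg2 j (u j) hduj (j+2) (Ne.symm (fin3_ne2 j))
    have hd2v : (c (j+2)).deg (v j) = 2 := hdeg2 j (v j) hdj' (j+2) (Ne.symm (fin3_ne2 j))
    have hnR : ¬ (c (j+2)).R (u j) (v j) := by
      intro hcon
      exact exactly_once c hpair (hne j)
        (by
          have hp := hpt (u j)
          norm_num at hp ⊢
          exact hp)
        (Ne.symm (fin3_ne2 j)) hcon (hR j)
    exact hS2 (j+2) (u j) (v j) hd2u hd2v hnR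

end Endgames

/-- The combinatorial heart: any family of three qubit coordinates on `m`
points (`5 ≤ m ≤ 7`) which is pairwise orthogonal admits a parallel cover. -/
theorem abstract_cover {m : ℕ} (hm5 : 5 ≤ m) (hm7 : m ≤ 7)
    (c : Fin 3 → QCoord (Fin m))
    (hpair : ∀ p q : Fin m, p ≠ q → ∃ i, (c i).R p q) :
    ∃ q : Fin 3 → Fin m, ∀ p, ∃ i, (c i).S (q i) p := by
  by_contra hnc
  obtain rfl | rfl | rfl : m = 5 ∨ m = 6 ∨ m = 7 := by omega
  · exact endgame5 c hpair hnc
  · exact endgame6 c hpair hnc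
  · exact endgame7 c hpair hnc

end UPB3

namespace UPB3

open scoped InnerProductSpace

variable {m : ℕ}

/-- The qubit coordinate structure induced by a product family. -/
noncomputable def geomCoord (V : Fin m → Fin 3 → EuclideanSpace ℂ (Fin 2))
    (hV0 : ∀ p i, V p i ≠ 0) (i : Fin 3) : QCoord (Fin m) where
  R p q := ⟪V p i, V q i⟫_ℂ = 0
  S p q := ∃ t : ℂ, V q i = t • V p i
  rsym := by
    intro p q h
    exact inner_eq_zero_symm.mp h
  rirr := by
    intro p h
    exact hV0 p i (inner_self_eq_zero.mp h)
  srefl := fun p => ⟨1, (one_smul ℂ (V p i)).symm⟩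
  ssymm := by
    rintro p q ⟨t, h⟩
    have ht : t ≠ 0 := by
      rintro rfl
      rw [zero_smul] at h
      exact hV0 q i h
    exact ⟨t⁻¹, by rw [h, smul_smul, inv_mul_cancel₀ ht, one_smul]⟩
  strans := by
    rintro p q r ⟨t, h⟩ ⟨s, h'⟩
    exact ⟨s * t, by rw [h', h, smul_smul]⟩
  sr := by
    rintro p q r ⟨t, h⟩ hR
    rw [h, inner_smul_left, hR, mul_zero]
  snr := by
    rintro p q ⟨t, h⟩ hR
    rw [h, inner_smul_right] at hR
    rcases mul_eq_zero.mp hR with rfl | h0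
    · rw [zero_smul] at h
      exact hV0 q i h
    · exact hV0 p i (inner_self_eq_zero.mp h0)
  rrs := by
    intro p q r h1 h2
    exact perp_perp (hV0 p i) (hV0 q i) h1 h2

end UPB3


open scoped InnerProductSpace

/-- there is no 3-qubit UPB of size `m` for `5 ≤ m ≤ 7`. -/
theorem no_three_qubit_upb_of_size_between (m : ℕ) (hm₁ : 5 ≤ m) (hm₂ : m ≤ 7)
    (V : Fin m → Fin 3 → EuclideanSpace ℂ (Fin 2))
    (hV : PairwiseOrthProdFamily V) :
    Extendible V := by
  classical
  obtain ⟨hV0, hVorth⟩ := hV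
  set c : Fin 3 → QCoord (Fin m) := UPB3.geomCoord V hV0 with hc
  have hpair : ∀ p q : Fin m, p ≠ q → ∃ i, (c i).R p q := by
    intro p q hpq
    obtain ⟨i, hi⟩ := hVorth p q hpq
    exact ⟨i, hi⟩
  obtain ⟨q, hq⟩ := UPB3.abstract_cover hm₁ hm₂ c hpair
  -- build the witness from orthogonal complements of the chosen local states
  have hw := fun i => exists_perp (V (q i) i) (hV0 (q i) i)
  refine ⟨fun i => (hw i).choose, fun i => (hw i).choose_spec.1, fun p => ?_⟩
  obtain ⟨i, t, ht⟩ := hq p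
  refine ⟨i, ?_⟩
  rw [ht, inner_smul_right, (hw i).choose_spec.2, mul_zero]
end

section
/- For every odd n ≥ 3, there is no n-qubit unextendible product basis of size n + 2: every pairwise orthogonal product family of size n + 2 on n qubits (n odd) is extendible. -/
open scoped InnerProductSpace

namespace UPB
open Finset
noncomputable section

abbrev Qb := EuclideanSpace ℂ (Fin 2)

lemma inner_two (u v : Qb) :
    ⟪u, v⟫_ℂ = starRingEnd ℂ (u 0) * v 0 + starRingEnd ℂ (u 1) * v 1 := by
  rw [PiLp.inner_apply, Fin.sum_univ_two]; simp [mul_comm]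

lemma exists_ne_zero {v : Qb} (hv : v ≠ 0) : v 0 ≠ 0 ∨ v 1 ≠ 0 := by
  by_contra h
  push_neg at h
  apply hv
  ext i
  fin_cases i <;> simp [h.1, h.2]

def perp (v : Qb) : Qb := WithLp.toLp 2 fun i => if i = 0 then -(starRingEnd ℂ (v 1)) else starRingEnd ℂ (v 0)

lemma perp_zero (v : Qb) : perp v 0 = -(starRingEnd ℂ (v 1)) := rfl
lemma perp_one (v : Qb) : perp v 1 = starRingEnd ℂ (v 0) := rfl

lemma perp_ne_zero {v : Qb} (hv : v ≠ 0) : perp v ≠ 0 := by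
  intro h
  rcases exists_ne_zero hv with h0 | h1
  · have := congrArg (fun x : Qb => x 1) h
    simp [perp] at this
    exact h0 this
  · have := congrArg (fun x : Qb => x 0) h
    simp [perp] at this
    exact h1 this

lemma inner_perp_smul (t : ℂ) (v : Qb) : ⟪perp v, t • v⟫_ℂ = 0 := by
  rw [inner_two]
  have h0 : (t • v) 0 = t * v 0 := rfl
  have h1 : (t • v) 1 = t * v 1 := rfl
  rw [h0, h1, perp_zero, perp_one]
  simp
  ring

lemma parallel_of_orth {u v w : Qb} (hu : u ≠ 0) (hv : v ≠ 0) (hw : w ≠ 0)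
    (h1 : ⟪u, v⟫_ℂ = 0) (h2 : ⟪u, w⟫_ℂ = 0) : ∃ t : ℂ, w = t • v := by
  rw [inner_two] at h1 h2
  set a := starRingEnd ℂ (u 0) with ha
  set b := starRingEnd ℂ (u 1) with hb
  rcases exists_ne_zero hu with h0 | h0
  · -- a ≠ 0
    have hA : a ≠ 0 := by simpa [ha] using h0
    -- v 0 = -(b * v 1)/a etc.; v 1 ≠ 0
    have hv1 : v 1 ≠ 0 := by
      intro hz
      rcases exists_ne_zero hv with k | k
      · rw [hz] at h1; simp at h1; rcases h1 with h1 | h1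
        · exact absurd h1 hA
        · exact k h1
      · exact k hz
    have hw1 : w 1 ≠ 0 := by
      intro hz
      rcases exists_ne_zero hw with k | k
      · rw [hz] at h2; simp at h2; rcases h2 with h2 | h2
        · exact absurd h2 hA
        · exact k h2
      · exact k hz
    refine ⟨w 1 / v 1, ?_⟩
    ext i
    fin_cases i
    · show w 0 = w 1 / v 1 * v 0
      have e1 : v 0 = -(b * v 1) / a := by field_simp; linear_combination h1
      have e2 : w 0 = -(b * w 1) / a := by field_simp; linear_combination h2
      rw [e1, e2]; field_simp
    · show w 1 = w 1 / v 1 * v 1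
      field_simp
  · have hB : b ≠ 0 := by simpa [hb] using h0
    have hv0 : v 0 ≠ 0 := by
      intro hz
      rcases exists_ne_zero hv with k | k
      · exact k hz
      · rw [hz] at h1; simp at h1; rcases h1 with h1 | h1
        · exact absurd h1 hB
        · exact k h1
    have hw0 : w 0 ≠ 0 := by
      intro hz
      rcases exists_ne_zero hw with k | k
      · exact k hz
      · rw [hz] at h2; simp at h2; rcases h2 with h2 | h2
        · exact absurd h2 hB
        · exact k h2
    refine ⟨w 0 / v 0, ?_⟩
    ext i
    fin_cases i
    · show w 0 = w 0 / v 0 * v 0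
      field_simp
    · show w 1 = w 0 / v 0 * v 1
      have e1 : v 1 = -(a * v 0) / b := by field_simp; linear_combination h1
      have e2 : w 1 = -(a * w 0) / b := by field_simp; linear_combination h2
      rw [e1, e2]; field_simp

end
structure Setup (n : ℕ) where
  par : Fin n → Fin (n + 2) → Fin (n + 2) → Prop
  orth : Fin n → Fin (n + 2) → Fin (n + 2) → Prop
  par_equiv : ∀ i, Equivalence (par i)
  orth_symm : ∀ i p q, orth i p q → orth i q p
  orth_irrefl : ∀ i p, ¬ orth i p p
  orth_par : ∀ i p q q', orth i p q → par i q q' → orth i p q'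
  orth_two : ∀ i p q q', orth i p q → orth i p q' → par i q q'
  cov : ∀ p q, p ≠ q → ∃ i, orth i p q
  NE : ∀ f : Fin n → Fin (n + 2), ∃ p, ∀ i, ¬ par i (f i) p

namespace Setup

attribute [local instance] Classical.propDecidable

variable {n : ℕ} (S : Setup n)

/-- parallel class -/
noncomputable def cls (i : Fin n) (p : Fin (n + 2)) : Finset (Fin (n + 2)) :=
  univ.filter (S.par i p)

/-- orthogonality neighborhood -/
noncomputable def Nb (i : Fin n) (p : Fin (n + 2)) : Finset (Fin (n + 2)) :=
  univ.filter (S.orth i p)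

noncomputable def deg (i : Fin n) (p : Fin (n + 2)) : ℕ := (S.Nb i p).card

noncomputable def E (i : Fin n) : ℕ := ∑ p, S.deg i p

noncomputable def mult (p q : Fin (n + 2)) : ℕ := (univ.filter (fun i => S.orth i p q)).card

variable {S}

lemma mem_cls {i p q} : q ∈ S.cls i p ↔ S.par i p q := by simp [cls]

lemma mem_Nb {i p q} : q ∈ S.Nb i p ↔ S.orth i p q := by simp [Nb]

lemma mem_cls_self {i p} : p ∈ S.cls i p := mem_cls.2 ((S.par_equiv i).refl p)

lemma cls_eq_of_par {i p q} (h : S.par i p q) : S.cls i p = S.cls i q := by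
  ext r
  simp only [mem_cls]
  exact ⟨fun hr => (S.par_equiv i).trans ((S.par_equiv i).symm h) hr,
         fun hr => (S.par_equiv i).trans h hr⟩

lemma cls_eq_of_mem {i p q} (h : q ∈ S.cls i p) : S.cls i p = S.cls i q :=
  cls_eq_of_par (mem_cls.1 h)

lemma cls_disj_of_ne {i p q} (h : S.cls i p ≠ S.cls i q) : Disjoint (S.cls i p) (S.cls i q) := by
  rw [Finset.disjoint_left]
  intro r hr hr'
  exact h ((cls_eq_of_mem hr).trans (cls_eq_of_mem hr').symm)

lemma not_par_of_orth {i p q} (h : S.orth i p q) : ¬ S.par i p q := fun hp =>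
  S.orth_irrefl i q (S.orth_par i q p q (S.orth_symm i p q h) hp)

lemma orth_ne {i p q} (h : S.orth i p q) : p ≠ q := by
  rintro rfl; exact S.orth_irrefl i p h

lemma orth_par_left {i p p' q} (h : S.orth i p q) (hp : S.par i p p') : S.orth i p' q :=
  S.orth_symm i q p' (S.orth_par i q p p' (S.orth_symm i p q h) hp)

lemma Nb_eq_cls {i p q} (h : q ∈ S.Nb i p) : S.Nb i p = S.cls i q := by
  ext r
  simp only [mem_Nb, mem_cls] at *
  exact ⟨fun hr => S.orth_two i p q r h hr, fun hr => S.orth_par i p q r h hr⟩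

lemma mem_Nb_symm {i p q} (h : q ∈ S.Nb i p) : p ∈ S.Nb i q :=
  mem_Nb.2 (S.orth_symm i p q (mem_Nb.1 h))

/-- The selection lemma: a selection of classes covering `|S| + 2` vertices contradicts NE. -/
lemma no_cover (T : Finset (Fin n)) (g : Fin n → Fin (n + 2))
    (h : T.card + 2 ≤ (T.biUnion fun i => S.cls i (g i)).card) : False := by
  classical
  set U := T.biUnion fun i => S.cls i (g i) with hU
  set W := (univ : Finset (Fin (n + 2))) \ U with hW
  have hWcard : W.card ≤ ((univ : Finset (Fin n)) \ T).card := by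
    have h1 : W.card = (n + 2) - U.card := by
      rw [hW, card_sdiff_of_subset (subset_univ _), card_univ, Fintype.card_fin]
    have h2 : ((univ : Finset (Fin n)) \ T).card = n - T.card := by
      rw [card_sdiff_of_subset (subset_univ _), card_univ, Fintype.card_fin]
    have hUle : U.card ≤ n + 2 := by
      calc U.card ≤ (univ : Finset (Fin (n+2))).card := card_le_card (subset_univ _)
      _ = n + 2 := by rw [card_univ, Fintype.card_fin]
    have hTle : T.card ≤ n := by
      calc T.card ≤ (univ : Finset (Fin n)).card := card_le_card (subset_univ _)
      _ = n := by rw [card_univ, Fintype.card_fin]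
    omega
  have hcards : Fintype.card W ≤ Fintype.card ↥((univ : Finset (Fin n)) \ T) := by
    rw [Fintype.card_coe, Fintype.card_coe]; exact hWcard
  obtain ⟨e⟩ := Function.Embedding.nonempty_of_card_le hcards
  set f : Fin n → Fin (n + 2) := fun i =>
    if hi : i ∈ T then g i
    else if h2 : ∃ w : W, (e w : Fin n) = i then (h2.choose : Fin (n + 2))
    else g i with hf
  obtain ⟨p, hp⟩ := S.NE f
  by_cases hpU : p ∈ U
  · rw [hU] at hpU
    obtain ⟨i, hiT, hpi⟩ := Finset.mem_biUnion.1 hpU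
    apply hp i
    have : f i = g i := by rw [hf]; simp [hiT]
    rw [this]
    exact mem_cls.1 hpi
  · have hpW : p ∈ W := by rw [hW]; simp [hpU]
    set w : W := ⟨p, hpW⟩ with hw
    set i : Fin n := (e w : Fin n) with hi
    have hiT : i ∉ T := by
      have := (e w).2
      simp only [Finset.mem_sdiff] at this
      exact this.2
    have hex : ∃ w' : W, (e w' : Fin n) = i := ⟨w, rfl⟩
    have : f i = p := by
      rw [hf]
      simp only [dif_neg hiT, dif_pos hex]
      have := hex.choose_spec
      have hww : hex.choose = w := by
        apply e.injective
        apply Subtype.ext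
        rw [this]
      rw [hww]
    apply hp i
    rw [this]
    exact (S.par_equiv i).refl p

lemma card_cls_le_two (i : Fin n) (p : Fin (n + 2)) : (S.cls i p).card ≤ 2 := by
  by_contra h
  push_neg at h
  apply no_cover (S := S) {i} (fun _ => p)
  rw [Finset.singleton_biUnion, Finset.card_singleton]
  omega

lemma cls_meet {i j : Fin n} {p q : Fin (n + 2)} (hij : i ≠ j)
    (hp : (S.cls i p).card = 2) (hq : (S.cls j q).card = 2) :
    ∃ x, x ∈ S.cls i p ∧ x ∈ S.cls j q := by
  by_contra h
  push_neg at h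
  have hdisj : Disjoint (S.cls i p) (S.cls j q) := by
    rw [Finset.disjoint_left]
    intro x hx hx'
    exact h x hx hx'
  apply no_cover (S := S) {i, j} (fun k => if k = i then p else q)
  have hbi : ({i, j} : Finset (Fin n)).biUnion (fun k => S.cls k (if k = i then p else q))
      = S.cls i p ∪ S.cls j q := by
    rw [Finset.biUnion_insert, Finset.singleton_biUnion]
    simp [hij.symm]
  rw [hbi, Finset.card_union_of_disjoint hdisj, hp, hq, Finset.card_insert_of_notMem (by simp [hij]),
    Finset.card_singleton]

lemma deg_le_two (i : Fin n) (p : Fin (n + 2)) : S.deg i p ≤ 2 := by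
  rcases Finset.eq_empty_or_nonempty (S.Nb i p) with h | ⟨q, hq⟩
  · simp [deg, h]
  · rw [deg, Nb_eq_cls hq]
    exact card_cls_le_two i q


lemma deg_eq_sum (i : Fin n) (p : Fin (n + 2)) :
    S.deg i p = ∑ q, if S.orth i p q then 1 else 0 := by
  rw [deg, Nb, Finset.card_filter]

lemma mult_eq_sum (p q : Fin (n + 2)) :
    S.mult p q = ∑ i, if S.orth i p q then 1 else 0 := by
  rw [mult, Finset.card_filter]

lemma sum_E_eq : ∑ i, S.E i = ∑ p, ∑ q, S.mult p q := by
  simp only [E, deg_eq_sum, mult_eq_sum]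
  rw [Finset.sum_comm]
  congr 1
  funext p
  rw [Finset.sum_comm]

lemma one_le_mult {p q : Fin (n + 2)} (h : p ≠ q) : 1 ≤ S.mult p q := by
  obtain ⟨i, hi⟩ := S.cov p q h
  rw [mult]
  exact Finset.card_pos.2 ⟨i, by simp [hi]⟩

lemma main_lower (s : Finset (Fin (n + 2) × Fin (n + 2)))
    (hs : ∀ z ∈ s, z.1 ≠ z.2 ∧ 2 ≤ S.mult z.1 z.2) :
    (n + 2) * (n + 1) + s.card ≤ ∑ i, S.E i := by
  rw [sum_E_eq, ← Finset.sum_product']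
  have hle : ∀ z ∈ (univ ×ˢ univ : Finset (Fin (n+2) × Fin (n+2))),
      (if z.1 ≠ z.2 then 1 else 0) + (if z ∈ s then 1 else 0) ≤ S.mult z.1 z.2 := by
    intro z _
    by_cases hz : z ∈ s
    · obtain ⟨h1, h2⟩ := hs z hz
      simp [h1, hz]; omega
    · by_cases hne : z.1 ≠ z.2
      · simpa [hne, hz] using one_le_mult hne
      · simp [hne, hz]
  calc (n + 2) * (n + 1) + s.card
      = ∑ z ∈ (univ ×ˢ univ : Finset (Fin (n+2) × Fin (n+2))),
          ((if z.1 ≠ z.2 then 1 else 0) + (if z ∈ s then 1 else 0)) := by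
        rw [Finset.sum_add_distrib]
        congr 1
        · rw [Finset.sum_product]
          have : ∀ p : Fin (n+2), (∑ q : Fin (n+2), if p ≠ q then 1 else 0) = n + 1 := by
            intro p
            rw [← Finset.card_filter]
            have : (univ.filter fun q : Fin (n+2) => p ≠ q) = univ.erase p := by
              ext q; simp [eq_comm, ne_comm]
            rw [this, Finset.card_erase_of_mem (mem_univ p), card_univ, Fintype.card_fin]
            omega
          simp only [this]
          rw [Finset.sum_const, card_univ, Fintype.card_fin, smul_eq_mul]
        · rw [← Finset.card_filter, Finset.univ_product_univ, Finset.filter_mem_eq_inter,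
            Finset.univ_inter]
    _ ≤ ∑ z ∈ (univ ×ˢ univ : Finset (Fin (n+2) × Fin (n+2))), S.mult z.1 z.2 :=
        Finset.sum_le_sum hle

lemma demand : (n + 2) * (n + 1) ≤ ∑ i, S.E i := by
  simpa using main_lower (S := S) ∅ (by simp)

/-- an involution without fixed points gives even cardinality -/
lemma even_card_invol {α : Type*} [DecidableEq α] (s : Finset α) (σ : α → α)
    (h1 : ∀ x ∈ s, σ x ∈ s) (h2 : ∀ x ∈ s, σ (σ x) = x) (h3 : ∀ x ∈ s, σ x ≠ x) :
    Even s.card := by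
  induction s using Finset.strongInduction with
  | _ s ih =>
    rcases Finset.eq_empty_or_nonempty s with rfl | ⟨x, hx⟩
    · simp
    · have hσx := h1 x hx
      have hne := h3 x hx
      set s' := s \ {x, σ x} with hs'
      have hsub : s' ⊂ s := by
        refine Finset.ssubset_iff_of_subset (Finset.sdiff_subset) |>.2 ⟨x, hx, by simp [hs']⟩
      have hcard : s'.card = s.card - 2 := by
        rw [hs', Finset.card_sdiff_of_subset (by intro y hy; simp at hy; rcases hy with rfl | rfl <;> assumption)]
        congr 1
        rw [Finset.card_insert_of_notMem (by simp [Ne.symm hne]), Finset.card_singleton]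
      have hev : Even s'.card := by
        apply ih s' hsub
        · intro y hy
          rw [hs', Finset.mem_sdiff] at hy ⊢
          obtain ⟨hy1, hy2⟩ := hy
          refine ⟨h1 y hy1, ?_⟩
          simp only [Finset.mem_insert, Finset.mem_singleton] at hy2 ⊢
          push_neg at hy2 ⊢
          constructor
          · intro hc; apply hy2.2; rw [← hc, h2 y hy1]
          · intro hc; apply hy2.1; have := h2 y hy1; rw [hc] at this; rw [← this, h2 x hx]
        · intro y hy; exact h2 y (Finset.mem_sdiff.1 hy).1
        · intro y hy; exact h3 y (Finset.mem_sdiff.1 hy).1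
      have h2le : 2 ≤ s.card := by
        have : ({x, σ x} : Finset α) ⊆ s := by
          intro y hy; simp at hy; rcases hy with rfl | rfl <;> assumption
        calc 2 = ({x, σ x} : Finset α).card := by
              rw [Finset.card_insert_of_notMem (by simp [Ne.symm hne]), Finset.card_singleton]
          _ ≤ s.card := card_le_card this
      rcases hev with ⟨k, hk⟩
      exact ⟨k + 1, by omega⟩

lemma E_even (i : Fin n) : Even (S.E i) := by
  classical
  have hE : S.E i = ((univ ×ˢ univ : Finset (Fin (n+2) × Fin (n+2))).filter
      (fun z => S.orth i z.1 z.2)).card := by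
    rw [Finset.card_filter, E]
    rw [Finset.sum_product]
    simp only [deg_eq_sum]
  rw [hE]
  apply even_card_invol _ (fun z => (z.2, z.1))
  · intro z hz
    simp only [Finset.mem_filter] at hz ⊢
    exact ⟨by simp, S.orth_symm i _ _ hz.2⟩
  · intro z _; rfl
  · intro z hz
    simp only [Finset.mem_filter] at hz
    intro hc
    have : z.1 = z.2 := by
      have := congrArg Prod.fst hc
      simpa using this.symm
    exact orth_ne hz.2 this

/-- vertices of degree ≥ 2 at qubit i -/
noncomputable def D2 (i : Fin n) : Finset (Fin (n + 2)) :=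
  univ.filter (fun p => 2 ≤ S.deg i p)

lemma E_le_base (i : Fin n) : S.E i ≤ (n + 2) + (S.D2 i).card := by
  have hle : ∀ p ∈ (univ : Finset (Fin (n+2))), S.deg i p ≤ 1 + if p ∈ S.D2 i then 1 else 0 := by
    intro p _
    by_cases hp : p ∈ S.D2 i
    · rw [if_pos hp]; exact deg_le_two i p
    · have h' := hp
      rw [if_neg hp]
      simp only [D2, Finset.mem_filter, mem_univ, true_and, not_le] at h'
      omega
  calc S.E i ≤ ∑ p, (1 + if p ∈ S.D2 i then 1 else 0) := Finset.sum_le_sum hle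
    _ = (n + 2) + (S.D2 i).card := by
        rw [Finset.sum_add_distrib, Finset.sum_const, card_univ, Fintype.card_fin, smul_eq_mul,
          mul_one, ← Finset.card_filter]
        congr 2
        rw [Finset.filter_mem_eq_inter, Finset.inter_eq_right.2 (subset_univ _)]

lemma E_le_all (i : Fin n) : S.E i ≤ 2 * (n + 2) := by
  calc S.E i ≤ ∑ _p : Fin (n+2), 2 := Finset.sum_le_sum (fun p _ => deg_le_two i p)
    _ = 2 * (n + 2) := by rw [Finset.sum_const, card_univ, Fintype.card_fin, smul_eq_mul]; ring

lemma even_le_odd {a b : ℕ} (ha : Even a) (hb : Odd b) (h : a ≤ b) : a + 1 ≤ b := by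
  rcases ha with ⟨k, rfl⟩; rcases hb with ⟨m, rfl⟩; omega

/-- if there is no 2-class at `i` then `D2 i` is empty -/
lemma D2_empty {i : Fin n} (h : ∀ p, (S.cls i p).card ≠ 2) : S.D2 i = ∅ := by
  rw [Finset.eq_empty_iff_forall_notMem]
  intro p hp
  simp only [D2, Finset.mem_filter, mem_univ, true_and] at hp
  simp only [deg] at hp
  obtain ⟨q, hq⟩ := Finset.card_pos.1 (by omega : 0 < (S.Nb i p).card)
  have := Nb_eq_cls hq
  apply h q
  have h2 := card_cls_le_two (S := S) i q
  rw [this] at hp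
  omega

lemma D2_subset {i : Fin n} {q₁ q₂ : Fin (n + 2)}
    (h : ∀ p, (S.cls i p).card = 2 → S.cls i p = S.cls i q₁ ∨ S.cls i p = S.cls i q₂) :
    S.D2 i ⊆ S.Nb i q₁ ∪ S.Nb i q₂ := by
  intro p hp
  simp only [D2, Finset.mem_filter, mem_univ, true_and] at hp
  simp only [deg] at hp
  obtain ⟨q, hq⟩ := Finset.card_pos.1 (by omega : 0 < (S.Nb i p).card)
  have hNb := Nb_eq_cls hq
  have hcard : (S.cls i q).card = 2 := by
    have h2 := card_cls_le_two (S := S) i q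
    rw [hNb] at hp; omega
  rcases h q hcard with hc | hc
  · have : q₁ ∈ S.Nb i p := by
      rw [hNb, hc]; exact mem_cls_self
    exact Finset.mem_union_left _ (mem_Nb_symm this)
  · have : q₂ ∈ S.Nb i p := by
      rw [hNb, hc]; exact mem_cls_self
    exact Finset.mem_union_right _ (mem_Nb_symm this)

lemma E_le_none {i : Fin n} (hodd : Odd n) (h : ∀ p, (S.cls i p).card ≠ 2) :
    S.E i ≤ n + 1 := by
  have h1 : S.E i ≤ n + 2 := by
    have := E_le_base (S := S) i
    rw [D2_empty h] at this
    simpa using this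
  have := even_le_odd (E_even i) (by rcases hodd with ⟨k, rfl⟩; exact ⟨k + 1, by ring⟩ : Odd (n + 2)) h1
  omega

lemma E_le_one2 {i : Fin n} (hodd : Odd n)
    (h : ∀ p q, (S.cls i p).card = 2 → (S.cls i q).card = 2 → S.cls i p = S.cls i q) :
    S.E i ≤ n + 3 := by
  by_cases hex : ∃ q, (S.cls i q).card = 2
  · obtain ⟨q₁, hq₁⟩ := hex
    have hsub := D2_subset (S := S) (q₁ := q₁) (q₂ := q₁)
      (fun p hp => Or.inl (h p q₁ hp hq₁))
    have hD2 : (S.D2 i).card ≤ 2 := by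
      calc (S.D2 i).card ≤ (S.Nb i q₁ ∪ S.Nb i q₁).card := card_le_card hsub
        _ ≤ 2 := by rw [Finset.union_self]; exact deg_le_two i q₁
    have h1 : S.E i ≤ n + 4 := by have := E_le_base (S := S) i; omega
    have := even_le_odd (E_even i)
      (by rcases hodd with ⟨k, rfl⟩; exact ⟨k + 2, by ring⟩ : Odd (n + 4)) h1
    omega
  · push_neg at hex
    have := E_le_none hodd hex
    omega

lemma E_le_two2 {i : Fin n} {q₁ q₂ : Fin (n + 2)} (hodd : Odd n)
    (h : ∀ p, (S.cls i p).card = 2 → S.cls i p = S.cls i q₁ ∨ S.cls i p = S.cls i q₂) :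
    S.E i ≤ n + 5 := by
  have hsub := D2_subset (S := S) h
  have hD2 : (S.D2 i).card ≤ 4 := by
    calc (S.D2 i).card ≤ (S.Nb i q₁ ∪ S.Nb i q₂).card := card_le_card hsub
      _ ≤ (S.Nb i q₁).card + (S.Nb i q₂).card := Finset.card_union_le _ _
      _ ≤ 4 := by have := deg_le_two (S := S) i q₁; have := deg_le_two (S := S) i q₂;
                  simp only [deg] at *; omega
  have h1 : S.E i ≤ n + 6 := by have := E_le_base (S := S) i; omega
  have := even_le_odd (E_even i)
    (by rcases hodd with ⟨k, rfl⟩; exact ⟨k + 3, by ring⟩ : Odd (n + 6)) h1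
  omega


lemma pair_of_card_two {α : Type*} [DecidableEq α] {s : Finset α} {x : α}
    (h : s.card = 2) (hx : x ∈ s) : ∃ y, y ≠ x ∧ s = {x, y} := by
  obtain ⟨a, b, hab, rfl⟩ := Finset.card_eq_two.1 h
  simp only [Finset.mem_insert, Finset.mem_singleton] at hx
  rcases hx with rfl | rfl
  · exact ⟨b, fun hc => hab hc.symm, rfl⟩
  · exact ⟨a, fun hc => hab hc, Finset.pair_comm a x⟩

theorem false_ (S : Setup n) (hn3 : 3 ≤ n) (hodd : Odd n) : False := by
  classical
  have hdem := demand (S := S)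
  -- the set of qubits with two distinct 2-classes
  set T : Finset (Fin n) := univ.filter
    (fun k => ∃ p q, (S.cls k p).card = 2 ∧ (S.cls k q).card = 2 ∧ S.cls k p ≠ S.cls k q)
    with hTdef
  set Bs : Finset (Fin n) := univ.filter
    (fun k => (∃ p, (S.cls k p).card = 2) ∧ k ∉ T) with hBdef
  have hTBdisj : Disjoint T Bs := by
    rw [Finset.disjoint_left]
    intro k hk hk'
    rw [hBdef, Finset.mem_filter] at hk'
    exact hk'.2.2 hk
  have hTBle : T.card + Bs.card ≤ n := by
    rw [← Finset.card_union_of_disjoint hTBdisj]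
    calc (T ∪ Bs).card ≤ (univ : Finset (Fin n)).card := card_le_card (subset_univ _)
      _ = n := by rw [card_univ, Fintype.card_fin]
  have hE_B : ∀ k ∈ Bs, S.E k ≤ n + 3 := by
    intro k hk
    rw [hBdef, Finset.mem_filter, hTdef, Finset.mem_filter] at hk
    apply E_le_one2 hodd
    intro p q hp hq
    by_contra hne
    exact hk.2.2 ⟨mem_univ k, p, q, hp, hq, hne⟩
  have hE_0 : ∀ k, k ∉ T → k ∉ Bs → S.E k ≤ n + 1 := by
    intro k hkT hkB
    apply E_le_none hodd
    intro p hp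
    apply hkB
    rw [hBdef, Finset.mem_filter]
    exact ⟨mem_univ k, ⟨p, hp⟩, hkT⟩
  rcases Finset.eq_empty_or_nonempty T with hTem | ⟨i₀, hi₀⟩
  · -- Case I : no qubit has two distinct 2-classes
    have hall : ∀ k : Fin n, S.E k ≤ n + 3 := by
      intro k
      by_cases hk : k ∈ Bs
      · exact hE_B k hk
      · have := hE_0 k (by rw [hTem]; exact notMem_empty k) hk
        omega
    have : ∑ i, S.E i ≤ n * (n + 3) := by
      calc ∑ i, S.E i ≤ ∑ _i : Fin n, (n + 3) := Finset.sum_le_sum (fun i _ => hall i)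
        _ = n * (n + 3) := by rw [Finset.sum_const, card_univ, Fintype.card_fin, smul_eq_mul]
    nlinarith
  · -- i₀ has two distinct 2-classes A, A'
    rw [hTdef, Finset.mem_filter] at hi₀
    obtain ⟨-, pA, pA', hcA, hcA', hAne⟩ := hi₀
    have hi₀T : i₀ ∈ T := by
      rw [hTdef, Finset.mem_filter]
      exact ⟨mem_univ i₀, pA, pA', hcA, hcA', hAne⟩
    set A := S.cls i₀ pA with hA
    set A' := S.cls i₀ pA' with hA'
    have hAA'disj : Disjoint A A' := cls_disj_of_ne hAne
    set Q : Finset (Fin (n + 2)) := A ∪ A' with hQ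
    have hQcard : Q.card = 4 := by
      rw [hQ, Finset.card_union_of_disjoint hAA'disj, hcA, hcA']
    by_cases hIIb : ∃ j, j ≠ i₀ ∧ ∃ pB, (S.cls j pB).card = 2
    case neg =>
      -- Case II.a : only i₀ has 2-classes
      push_neg at hIIb
      have h1 : S.E i₀ ≤ 2 * (n + 2) := E_le_all i₀
      have h2 : ∀ k ∈ univ.erase i₀, S.E k ≤ n + 1 := by
        intro k hk
        have hne : k ≠ i₀ := (Finset.mem_erase.1 hk).1
        apply E_le_none hodd
        intro p hp
        exact absurd hp (by simpa using hIIb k hne p)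
      have hsum : ∑ i, S.E i ≤ 2 * (n + 2) + (n - 1) * (n + 1) := by
        rw [← Finset.add_sum_erase _ _ (mem_univ i₀)]
        have : ∑ k ∈ univ.erase i₀, S.E k ≤ (n - 1) * (n + 1) := by
          calc ∑ k ∈ univ.erase i₀, S.E k ≤ ∑ _k ∈ univ.erase i₀, (n + 1) :=
                Finset.sum_le_sum h2
            _ = (n - 1) * (n + 1) := by
                rw [Finset.sum_const, Finset.card_erase_of_mem (mem_univ i₀), card_univ,
                  Fintype.card_fin, smul_eq_mul]
        omega
      obtain ⟨m, rfl⟩ : ∃ m, n = m + 1 := ⟨n - 1, by omega⟩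
      have hsub : m + 1 - 1 = m := rfl
      rw [hsub] at hsum
      nlinarith [hdem, hsum, hn3]
    case pos =>
    obtain ⟨j, hjne, pB, hpB⟩ := hIIb
    -- every 2-class at k ≠ i₀ is a cross pair
    have hX : ∀ k p, k ≠ i₀ → (S.cls k p).card = 2 →
        ∃ x y, x ∈ A ∧ y ∈ A' ∧ S.cls k p = {x, y} := by
      intro k p hk hp
      obtain ⟨x, hx1, hx2⟩ := cls_meet hk hp hcA
      obtain ⟨y, hy1, hy2⟩ := cls_meet hk hp hcA'
      have hxy : x ≠ y := by
        intro hc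
        subst hc
        exact Finset.disjoint_left.1 hAA'disj hx2 hy2
      refine ⟨x, y, hx2, hy2, ?_⟩
      have hsub : ({x, y} : Finset (Fin (n + 2))) ⊆ S.cls k p := by
        intro z hz
        simp only [Finset.mem_insert, Finset.mem_singleton] at hz
        rcases hz with rfl | rfl
        · exact hx1
        · exact hy1
      have hcard2 : ({x, y} : Finset (Fin (n + 2))).card = 2 := by
        rw [Finset.card_insert_of_notMem (by simpa using hxy), Finset.card_singleton]
      exact (Finset.eq_of_subset_of_card_le hsub (by rw [hp, hcard2])).symm
    -- every 2-class at i₀ is A or A'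
    have hI0 : ∀ p, (S.cls i₀ p).card = 2 → S.cls i₀ p = A ∨ S.cls i₀ p = A' := by
      intro p hp
      obtain ⟨x₀, y₀, hx₀, hy₀, hB₀⟩ := hX j pB hjne hpB
      obtain ⟨z, hz1, hz2⟩ := cls_meet (Ne.symm hjne) hp hpB
      rw [hB₀] at hz2
      simp only [Finset.mem_insert, Finset.mem_singleton] at hz2
      rcases hz2 with rfl | rfl
      · left
        rw [hA, cls_eq_of_mem hz1, ← cls_eq_of_mem hx₀]
      · right
        rw [hA', cls_eq_of_mem hz1, ← cls_eq_of_mem hy₀]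
    have hSubQ : ∀ k p, (S.cls k p).card = 2 → S.cls k p ⊆ Q := by
      intro k p hp
      by_cases hk : k = i₀
      · subst hk
        rcases hI0 p hp with h | h <;> rw [h]
        · exact Finset.subset_union_left
        · exact Finset.subset_union_right
      · obtain ⟨x, y, hx, hy, hxy⟩ := hX k p hk hp
        rw [hxy]
        intro z hz
        simp only [Finset.mem_insert, Finset.mem_singleton] at hz
        rcases hz with rfl | rfl
        · exact Finset.mem_union_left _ hx
        · exact Finset.mem_union_right _ hy
    -- choice of the two classes of a T-qubit
    have hTmem : ∀ k : Fin n, ∃ p q : Fin (n + 2), k ∈ T →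
        (S.cls k p).card = 2 ∧ (S.cls k q).card = 2 ∧ S.cls k p ≠ S.cls k q := by
      intro k
      by_cases hk : k ∈ T
      · rw [hTdef, Finset.mem_filter] at hk
        obtain ⟨-, p, q, h⟩ := hk
        exact ⟨p, q, fun _ => h⟩
      · exact ⟨pA, pA, fun h => absurd h hk⟩
    choose c₁ c₂ hc using hTmem
    have hTpartQ : ∀ k, k ∈ T → S.cls k (c₁ k) ∪ S.cls k (c₂ k) = Q := by
      intro k hk
      obtain ⟨h1, h2, hne⟩ := hc k hk
      have hdisj := cls_disj_of_ne hne
      have hsub : S.cls k (c₁ k) ∪ S.cls k (c₂ k) ⊆ Q :=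
        Finset.union_subset (hSubQ k _ h1) (hSubQ k _ h2)
      apply Finset.eq_of_subset_of_card_le hsub
      rw [Finset.card_union_of_disjoint hdisj, h1, h2, hQcard]
    have hTcls2 : ∀ k, k ∈ T → ∀ p, (S.cls k p).card = 2 →
        S.cls k p = S.cls k (c₁ k) ∨ S.cls k p = S.cls k (c₂ k) := by
      intro k hk p hp
      have hsub := hSubQ k p hp
      obtain ⟨z, hz⟩ : (S.cls k p).Nonempty := Finset.card_pos.1 (by omega)
      have hzQ : z ∈ Q := hsub hz
      rw [← hTpartQ k hk] at hzQ
      rcases Finset.mem_union.1 hzQ with h | h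
      · left; rw [cls_eq_of_mem hz, ← cls_eq_of_mem h]
      · right; rw [cls_eq_of_mem hz, ← cls_eq_of_mem h]
    have hTQcls : ∀ k, k ∈ T → ∀ x, x ∈ Q →
        (S.cls k x = S.cls k (c₁ k) ∨ S.cls k x = S.cls k (c₂ k)) ∧ (S.cls k x).card = 2 := by
      intro k hk x hx
      rw [← hTpartQ k hk] at hx
      rcases Finset.mem_union.1 hx with h | h
      · have he : S.cls k x = S.cls k (c₁ k) := (cls_eq_of_mem h).symm
        exact ⟨Or.inl he, by rw [he]; exact (hc k hk).1⟩
      · have he : S.cls k x = S.cls k (c₂ k) := (cls_eq_of_mem h).symm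
        exact ⟨Or.inr he, by rw [he]; exact (hc k hk).2.1⟩
    have hparof : ∀ k (x w : Fin (n + 2)), S.cls k x = S.cls k w → S.par k x w := by
      intro k x w h
      have : w ∈ S.cls k x := by rw [h]; exact mem_cls_self
      exact mem_cls.1 this
    set TA : Finset (Fin n) := T.filter (fun k => S.orth k (c₁ k) (c₂ k)) with hTAdef
    have hTAsubT : TA ⊆ T := Finset.filter_subset _ _
    have hTAorth : ∀ k, k ∈ TA → ∀ x y, x ∈ S.cls k (c₁ k) → y ∈ S.cls k (c₂ k) →
        S.orth k x y := by
      intro k hk x y hx hy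
      rw [hTAdef, Finset.mem_filter] at hk
      have h1 : S.orth k x (c₂ k) :=
        orth_par_left hk.2 (mem_cls.1 hx)
      exact S.orth_par k x (c₂ k) y h1 (mem_cls.1 hy)
    have hNonA : ∀ k, k ∈ T → k ∉ TA → ∀ x y, x ∈ Q → y ∈ Q → ¬ S.orth k x y := by
      intro k hkT hkA x y hx hy hoxy
      have hxc := hTQcls k hkT x hx
      have hyc := hTQcls k hkT y hy
      by_cases hsame : S.cls k x = S.cls k y
      · exact not_par_of_orth hoxy (hparof k x y hsame)
      · apply hkA
        rw [hTAdef, Finset.mem_filter]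
        refine ⟨hkT, ?_⟩
        rcases hxc.1 with he1 | he1 <;> rcases hyc.1 with he2 | he2
        · exact absurd (he1.trans he2.symm) hsame
        · have h1 : S.orth k (c₁ k) y := orth_par_left hoxy (hparof k x (c₁ k) he1)
          exact S.orth_par k (c₁ k) y (c₂ k) h1 (hparof k y (c₂ k) he2)
        · have h1 : S.orth k (c₂ k) y := orth_par_left hoxy (hparof k x (c₂ k) he1)
          have h2 : S.orth k (c₂ k) (c₁ k) :=
            S.orth_par k (c₂ k) y (c₁ k) h1 (hparof k y (c₁ k) he2)
          exact S.orth_symm k _ _ h2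
        · exact absurd (he1.trans he2.symm) hsame
    have hE_T : ∀ k, k ∈ T → S.E k ≤ n + 5 := fun k hk => E_le_two2 hodd (hTcls2 k hk)
    have hdegQ : ∀ k, k ∈ T → k ∉ TA → ∀ w, w ∈ Q → S.deg k w ≤ 1 := by
      intro k hkT hkA w hw
      by_contra hd
      push_neg at hd
      have hd' : 2 ≤ (S.Nb k w).card := hd
      obtain ⟨q, hq⟩ := Finset.card_pos.1 (by omega : 0 < (S.Nb k w).card)
      have hNb := Nb_eq_cls hq
      have hq2 : (S.cls k q).card = 2 := by
        have := card_cls_le_two (S := S) k q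
        rw [hNb] at hd'
        omega
      have hqQ : q ∈ Q := hSubQ k q hq2 mem_cls_self
      exact hNonA k hkT hkA w q hw hqQ (mem_Nb.1 hq)
    have hc₁Q : ∀ k, k ∈ T → c₁ k ∈ Q := by
      intro k hk
      rw [← hTpartQ k hk]
      exact Finset.mem_union_left _ mem_cls_self
    have hc₂Q : ∀ k, k ∈ T → c₂ k ∈ Q := by
      intro k hk
      rw [← hTpartQ k hk]
      exact Finset.mem_union_right _ mem_cls_self
    have hE_nonA : ∀ k, k ∈ T → k ∉ TA → S.E k ≤ n + 3 := by
      intro k hkT hkA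
      have hsub := D2_subset (S := S) (hTcls2 k hkT)
      have hD2 : (S.D2 k).card ≤ 2 := by
        calc (S.D2 k).card ≤ (S.Nb k (c₁ k) ∪ S.Nb k (c₂ k)).card := card_le_card hsub
          _ ≤ (S.Nb k (c₁ k)).card + (S.Nb k (c₂ k)).card := Finset.card_union_le _ _
          _ ≤ 2 := by
              have h1 := hdegQ k hkT hkA (c₁ k) (hc₁Q k hkT)
              have h2 := hdegQ k hkT hkA (c₂ k) (hc₂Q k hkT)
              simp only [deg] at h1 h2
              omega
      have h1 : S.E k ≤ n + 4 := by have := E_le_base (S := S) k; omega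
      have := even_le_odd (E_even k)
        (by rcases hodd with ⟨m, rfl⟩; exact ⟨m + 2, by ring⟩ : Odd (n + 4)) h1
      omega
    -- global budget
    have hbud : ∑ i, S.E i ≤ n * (n + 1) + 2 * (TA.card + T.card + Bs.card) := by
      have hpt : ∀ k : Fin n, S.E k ≤ (n + 1) +
          ((if k ∈ TA then 2 else 0) + (if k ∈ T then 2 else 0) + (if k ∈ Bs then 2 else 0)) := by
        intro k
        by_cases hkT : k ∈ T
        · have hkB : k ∉ Bs := Finset.disjoint_left.1 hTBdisj hkT
          by_cases hkA : k ∈ TA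
          · have := hE_T k hkT
            rw [if_pos hkA, if_pos hkT, if_neg hkB]
            omega
          · have := hE_nonA k hkT hkA
            rw [if_neg hkA, if_pos hkT, if_neg hkB]
            omega
        · have hkA : k ∉ TA := fun h => hkT (hTAsubT h)
          by_cases hkB : k ∈ Bs
          · have := hE_B k hkB
            rw [if_neg hkA, if_neg hkT, if_pos hkB]
            omega
          · have := hE_0 k hkT hkB
            rw [if_neg hkA, if_neg hkT, if_neg hkB]
            omega
      calc ∑ i, S.E i ≤ ∑ k : Fin n, ((n + 1) +
          ((if k ∈ TA then 2 else 0) + (if k ∈ T then 2 else 0) + (if k ∈ Bs then 2 else 0))) :=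
            Finset.sum_le_sum (fun k _ => hpt k)
        _ = n * (n + 1) + 2 * (TA.card + T.card + Bs.card) := by
            have e1 : ∑ k : Fin n, (if k ∈ TA then (2:ℕ) else 0) = 2 * TA.card := by
              rw [Finset.sum_ite_mem, Finset.univ_inter, Finset.sum_const, smul_eq_mul]; ring
            have e2 : ∑ k : Fin n, (if k ∈ T then (2:ℕ) else 0) = 2 * T.card := by
              rw [Finset.sum_ite_mem, Finset.univ_inter, Finset.sum_const, smul_eq_mul]; ring
            have e3 : ∑ k : Fin n, (if k ∈ Bs then (2:ℕ) else 0) = 2 * Bs.card := by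
              rw [Finset.sum_ite_mem, Finset.univ_inter, Finset.sum_const, smul_eq_mul]; ring
            simp only [Finset.sum_add_distrib, Finset.sum_const, card_univ,
              Fintype.card_fin, smul_eq_mul]
            rw [e1, e2, e3]
            ring
    -- partner choice: for k ∈ T and x ∈ Q the class of x is a pair {x, y}
    have hYex : ∀ (k : Fin n) (x : Fin (n + 2)), ∃ y, k ∈ T → x ∈ Q →
        (y ≠ x ∧ y ∈ Q ∧ S.cls k x = {x, y}) := by
      intro k x
      by_cases hk : k ∈ T
      · by_cases hx : x ∈ Q
        · have h2 := (hTQcls k hk x hx).2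
          obtain ⟨y, hy1, hy2⟩ := pair_of_card_two h2 mem_cls_self
          refine ⟨y, fun _ _ => ⟨hy1, ?_, hy2⟩⟩
          have : y ∈ S.cls k x := by rw [hy2]; simp
          exact hSubQ k x h2 this
        · exact ⟨x, fun _ h => absurd h hx⟩
      · exact ⟨x, fun h => absurd h hk⟩
    choose Yf hYf using hYex
    have hclsne : ∀ k k', k ∈ T → k' ∈ T → k ≠ k' → ∀ x, x ∈ Q →
        S.cls k x ≠ S.cls k' x := by
      intro k k' hk hk' hne x hx heq
      rcases (hTQcls k' hk' x hx).1 with he | he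
      · obtain ⟨z, hz1, hz2⟩ := cls_meet hne (hTQcls k hk x hx).2 (hc k' hk').2.1
        have hz3 : z ∈ S.cls k' (c₁ k') := by rw [← he, ← heq]; exact hz1
        exact Finset.disjoint_left.1 (cls_disj_of_ne (hc k' hk').2.2) hz3 hz2
      · obtain ⟨z, hz1, hz2⟩ := cls_meet hne (hTQcls k hk x hx).2 (hc k' hk').1
        have hz3 : z ∈ S.cls k' (c₂ k') := by rw [← he, ← heq]; exact hz1
        exact Finset.disjoint_left.1 (cls_disj_of_ne (hc k' hk').2.2) hz2 hz3
    have hYinj : ∀ x, x ∈ Q → ∀ k k', k ∈ T → k' ∈ T → Yf k x = Yf k' x → k = k' := by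
      intro x hx k k' hk hk' heq
      by_contra hne
      apply hclsne k k' hk hk' hne x hx
      rw [(hYf k x hk hx).2.2, (hYf k' x hk' hx).2.2, heq]
    have hT3 : T.card ≤ 3 := by
      have hpAQ : pA ∈ Q := Finset.mem_union_left _ mem_cls_self
      have : T.card ≤ (Q.erase pA).card := by
        apply Finset.card_le_card_of_injOn (fun k => Yf k pA)
        · intro k hk
          rw [Finset.mem_coe, Finset.mem_erase]
          exact ⟨(hYf k pA hk hpAQ).1, (hYf k pA hk hpAQ).2.1⟩
        · intro k hk k' hk' heq
          exact hYinj pA hpAQ k k' hk hk' heq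
      rw [Finset.card_erase_of_mem (Finset.mem_union_left _ mem_cls_self), hQcard] at this
      omega
    have hB0 : T.card = 3 → Bs = ∅ := by
      intro h3
      rw [Finset.eq_empty_iff_forall_notMem]
      intro ks hks
      have hksT : ks ∉ T := (Finset.mem_filter.1 hks).2.2
      have hksne : ks ≠ i₀ := fun h => hksT (h ▸ hi₀T)
      obtain ⟨ps, hps⟩ := (Finset.mem_filter.1 hks).2.1
      obtain ⟨xs, ys, hxs, hys, hCB⟩ := hX ks ps hksne hps
      have hxsQ : xs ∈ Q := Finset.mem_union_left _ hxs
      have hysQ : ys ∈ Q.erase xs := by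
        rw [Finset.mem_erase]
        exact ⟨fun h => Finset.disjoint_left.1 hAA'disj hxs (h ▸ hys),
          Finset.mem_union_right _ hys⟩
      have hcard_le : (Q.erase xs).card ≤ T.card := by
        rw [Finset.card_erase_of_mem hxsQ, hQcard, h3]
      obtain ⟨k, hk, hkb⟩ := Finset.surj_on_of_inj_on_of_card_le (fun k _ => Yf k xs)
        (fun k hk => by
          rw [Finset.mem_erase]
          exact ⟨(hYf k xs hk hxsQ).1, (hYf k xs hk hxsQ).2.1⟩)
        (fun k k' hk hk' heq => hYinj xs hxsQ k k' hk hk' heq)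
        hcard_le ys hysQ
      -- cls k xs = {xs, ys} = CB
      have hkey : S.cls k xs = S.cls ks ps := by
        rw [(hYf k xs hk hxsQ).2.2, hCB, hkb]
      rcases (hTQcls k hk xs hxsQ).1 with he | he
      · obtain ⟨z, hz1, hz2⟩ := cls_meet (fun h => hksT (h ▸ hk) : k ≠ ks) (hc k hk).2.1 hps
        have : z ∈ S.cls k (c₁ k) := by rw [← he, hkey]; exact hz2
        exact Finset.disjoint_left.1 (cls_disj_of_ne (hc k hk).2.2) this hz1
      · obtain ⟨z, hz1, hz2⟩ := cls_meet (fun h => hksT (h ▸ hk) : k ≠ ks) (hc k hk).1 hps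
        have : z ∈ S.cls k (c₂ k) := by rw [← he, hkey]; exact hz2
        exact Finset.disjoint_left.1 (cls_disj_of_ne (hc k hk).2.2) hz1 this
    have hmult2 : ∀ (k k' : Fin n) (x y : Fin (n + 2)), k ≠ k' → S.orth k x y →
        S.orth k' x y → 2 ≤ S.mult x y := by
      intro k k' x y hne h1 h2
      have hsub : ({k, k'} : Finset (Fin n)) ⊆ univ.filter (fun i => S.orth i x y) := by
        intro z hz
        simp only [Finset.mem_insert, Finset.mem_singleton] at hz
        rcases hz with rfl | rfl <;> simp [h1, h2]
      have : ({k, k'} : Finset (Fin n)).card ≤ (univ.filter (fun i => S.orth i x y)).card :=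
        card_le_card hsub
      rw [Finset.card_insert_of_notMem (by simpa using hne), Finset.card_singleton] at this
      exact this
    rcases Finset.eq_empty_or_nonempty TA with hTAem | ⟨kA, hkA⟩
    · -- no config-A qubit at all
      have hall : ∀ k : Fin n, S.E k ≤ n + 3 := by
        intro k
        by_cases hkT : k ∈ T
        · exact hE_nonA k hkT (by rw [hTAem]; exact notMem_empty k)
        · by_cases hkB : k ∈ Bs
          · exact hE_B k hkB
          · have := hE_0 k hkT hkB; omega
      have hs : ∑ i, S.E i ≤ n * (n + 3) := by
        calc ∑ i, S.E i ≤ ∑ _i : Fin n, (n + 3) := Finset.sum_le_sum (fun i _ => hall i)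
          _ = n * (n + 3) := by rw [Finset.sum_const, card_univ, Fintype.card_fin, smul_eq_mul]
      nlinarith [hdem, hs]
    · have hkAT : kA ∈ T := hTAsubT hkA
      by_cases hTA2 : 2 ≤ TA.card
      · -- two config-A qubits : four doubly covered ordered pairs
        have : (TA.erase kA).Nonempty := by
          rw [← Finset.card_pos, Finset.card_erase_of_mem hkA]
          omega
        obtain ⟨kA', hkA'e⟩ := this
        have hkA'A : kA' ∈ TA := Finset.mem_of_mem_erase hkA'e
        have hkA'T : kA' ∈ T := hTAsubT hkA'A
        have hne' : kA ≠ kA' := fun h => (Finset.mem_erase.1 hkA'e).1 h.symm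
        obtain ⟨x, hx1, hx2⟩ := cls_meet hne' (hc kA hkAT).1 (hc kA' hkA'T).1
        obtain ⟨y, hy1, hy2⟩ := cls_meet hne' (hc kA hkAT).2.1 (hc kA' hkA'T).2.1
        obtain ⟨x', hx'1, hx'2⟩ := cls_meet hne' (hc kA hkAT).1 (hc kA' hkA'T).2.1
        obtain ⟨y', hy'1, hy'2⟩ := cls_meet hne' (hc kA hkAT).2.1 (hc kA' hkA'T).1
        have h1 : S.orth kA x y := hTAorth kA hkA x y hx1 hy1
        have h2 : S.orth kA' x y := hTAorth kA' hkA'A x y hx2 hy2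
        have h3 : S.orth kA x' y' := hTAorth kA hkA x' y' hx'1 hy'1
        have h4 : S.orth kA' x' y' := S.orth_symm kA' _ _ (hTAorth kA' hkA'A y' x' hy'2 hx'2)
        have dAA := cls_disj_of_ne (hc kA hkAT).2.2
        have dAA' := cls_disj_of_ne (hc kA' hkA'T).2.2
        have dxy : x ≠ y := fun h => Finset.disjoint_left.1 dAA hx1 (by rw [h]; exact hy1)
        have dx'y' : x' ≠ y' := fun h => Finset.disjoint_left.1 dAA hx'1 (by rw [h]; exact hy'1)
        have dxx' : x ≠ x' := fun h => Finset.disjoint_left.1 dAA' hx2 (by rw [h]; exact hx'2)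
        have dxy' : x ≠ y' := fun h => Finset.disjoint_left.1 dAA hx1 (by rw [h]; exact hy'1)
        have dyx' : y ≠ x' := fun h => Finset.disjoint_left.1 dAA (by rw [h]; exact hx'1) hy1
        have dyy' : y ≠ y' := fun h => Finset.disjoint_left.1 dAA' (by rw [h]; exact hy'2) hy2
        set sp : Finset (Fin (n + 2) × Fin (n + 2)) := {(x, y), (y, x), (x', y'), (y', x')}
          with hsp
        have hspcard : sp.card = 4 := by
          rw [hsp]
          rw [Finset.card_insert_of_notMem (by
            simp only [Finset.mem_insert, Finset.mem_singleton, Prod.mk.injEq, not_or]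
            exact ⟨fun h => dxy h.1, fun h => dxx' h.1, fun h => dxy' h.1⟩)]
          rw [Finset.card_insert_of_notMem (by
            simp only [Finset.mem_insert, Finset.mem_singleton, Prod.mk.injEq, not_or]
            exact ⟨fun h => dyx' h.1, fun h => dyy' h.1⟩)]
          rw [Finset.card_insert_of_notMem (by
            simp only [Finset.mem_singleton, Prod.mk.injEq, not_or]
            exact fun h => dx'y' h.1)]
          rw [Finset.card_singleton]
        have hlow := main_lower (S := S) sp (by
          intro z hz
          rw [hsp] at hz
          simp only [Finset.mem_insert, Finset.mem_singleton] at hz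
          rcases hz with rfl | rfl | rfl | rfl
          · exact ⟨dxy, hmult2 kA kA' x y hne' h1 h2⟩
          · exact ⟨dxy.symm, hmult2 kA kA' y x hne' (S.orth_symm _ _ _ h1) (S.orth_symm _ _ _ h2)⟩
          · exact ⟨dx'y', hmult2 kA kA' x' y' hne' h3 h4⟩
          · exact ⟨dx'y'.symm, hmult2 kA kA' y' x' hne'
              (S.orth_symm _ _ _ h3) (S.orth_symm _ _ _ h4)⟩)
        rw [hspcard] at hlow
        have hTA3 : TA.card ≤ T.card := card_le_card hTAsubT
        rcases (by omega : T.card = 2 ∨ T.card = 3) with hT2 | hT3'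
        · -- |T| = 2
          have hBsle : Bs.card ≤ n - 2 := by omega
          nlinarith [hlow, hbud, hTA3, hT2, hBsle, hn3]
        · -- |T| = 3, so Bs = ∅ and n = 3
          have hBs0 := hB0 hT3'
          have hBs0' : Bs.card = 0 := by rw [hBs0]; exact Finset.card_empty
          have hTAeq : n ≤ TA.card := by nlinarith [hlow, hbud]
          have hnn : n = 3 := by omega
          subst hnn
          have hTAuniv : TA = univ := Finset.eq_univ_of_card TA (by rw [Fintype.card_fin]; omega)
          -- the vertex outside Q
          have hrex : ((univ : Finset (Fin 5)) \ Q).card = 1 := by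
            rw [Finset.card_sdiff_of_subset (subset_univ Q), card_univ, hQcard]
            rfl
          obtain ⟨r, hr⟩ := Finset.card_eq_one.1 hrex
          have hrQ : r ∉ Q := by
            have : r ∈ (univ : Finset (Fin 5)) \ Q := by rw [hr]; exact Finset.mem_singleton_self r
            exact (Finset.mem_sdiff.1 this).2
          have hallQ : ∀ p : Fin 5, p ∉ Q → p = r := by
            intro p hp
            have : p ∈ (univ : Finset (Fin 5)) \ Q := Finset.mem_sdiff.2 ⟨mem_univ p, hp⟩
            rw [hr] at this
            exact Finset.mem_singleton.1 this
          have hclsr : ∀ k, k ∈ T → S.cls k r = {r} := by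
            intro k hk
            have hle := card_cls_le_two (S := S) k r
            have hne2 : (S.cls k r).card ≠ 2 := by
              intro h2
              exact hrQ (hSubQ k r h2 mem_cls_self)
            have h1 : (S.cls k r).card = 1 := by
              have : 0 < (S.cls k r).card := Finset.card_pos.2 ⟨r, mem_cls_self⟩
              omega
            obtain ⟨z, hz⟩ := Finset.card_eq_one.1 h1
            have : r ∈ ({z} : Finset (Fin 5)) := by rw [← hz]; exact mem_cls_self
            rw [← Finset.mem_singleton.1 this] at hz
            exact hz
          have lemA : ∀ k, k ∈ TA → S.Nb k r = ∅ := by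
            intro k hk
            rw [Finset.eq_empty_iff_forall_notMem]
            intro q hq
            have hoq : S.orth k r q := mem_Nb.1 hq
            have hqr : q ≠ r := fun h => S.orth_irrefl k r (h ▸ hoq)
            have hqQ : q ∈ Q := by
              by_contra h
              exact hqr (hallQ q h)
            have hkT := hTAsubT hk
            have h2 : r ∈ S.Nb k q := mem_Nb_symm hq
            have h3 := Nb_eq_cls h2
            rcases (hTQcls k hkT q hqQ).1 with he | he
            · have ho1 : S.orth k q (c₂ k) := hTAorth k hk q (c₂ k)
                (by rw [← he]; exact mem_cls_self) mem_cls_self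
              have h4 : c₂ k ∈ S.Nb k q := mem_Nb.2 ho1
              rw [h3, hclsr k hkT] at h4
              have hcQ : c₂ k ∈ Q := hc₂Q k hkT
              rw [Finset.mem_singleton.1 h4] at hcQ
              exact hrQ hcQ
            · have ho1 : S.orth k q (c₁ k) := S.orth_symm k _ _ (hTAorth k hk (c₁ k) q
                mem_cls_self (by rw [← he]; exact mem_cls_self))
              have h4 : c₁ k ∈ S.Nb k q := mem_Nb.2 ho1
              rw [h3, hclsr k hkT] at h4
              have hcQ : c₁ k ∈ Q := hc₁Q k hkT
              rw [Finset.mem_singleton.1 h4] at hcQ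
              exact hrQ hcQ
          have hup : ∑ k : Fin 3, S.deg k r = 0 := by
            apply Finset.sum_eq_zero
            intro k _
            have hkTA : k ∈ TA := by rw [hTAuniv]; exact mem_univ k
            rw [deg, lemA k hkTA, Finset.card_empty]
          have hlo : 4 ≤ ∑ k : Fin 3, S.deg k r := by
            have hQsub : Q ⊆ univ.biUnion (fun k : Fin 3 => S.Nb k r) := by
              intro q hqQ
              have hne2 : r ≠ q := fun h => hrQ (h ▸ hqQ)
              obtain ⟨k, hk⟩ := S.cov r q hne2
              exact Finset.mem_biUnion.2 ⟨k, mem_univ k, mem_Nb.2 hk⟩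
            calc 4 = Q.card := hQcard.symm
              _ ≤ (univ.biUnion (fun k : Fin 3 => S.Nb k r)).card := card_le_card hQsub
              _ ≤ ∑ k : Fin 3, (S.Nb k r).card := Finset.card_biUnion_le
              _ = ∑ k : Fin 3, S.deg k r := rfl
          omega
      · -- TA = {kA}
        have hTAsing : TA = {kA} := by
          apply Finset.eq_singleton_iff_unique_mem.2
          refine ⟨hkA, fun x hx => ?_⟩
          exact Finset.card_le_one.1 (by omega) x hx kA hkA
        have hTA1 : TA.card = 1 := by rw [hTAsing]; exact Finset.card_singleton kA
        by_cases hT3' : T.card = 3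
        · -- |T| = 3 forces n = 3
          have hBs0 := hB0 hT3'
          have hBs0' : Bs.card = 0 := by rw [hBs0]; exact Finset.card_empty
          have hble : ∑ i, S.E i ≤ n * (n + 1) + 8 := by
            rw [hTA1, hT3', hBs0'] at hbud
            omega
          have hexp : (n + 2) * (n + 1) = n * (n + 1) + 2 * (n + 1) := by ring
          have hnn : n = 3 := by omega
          clear hexp hble hbud
          subst hnn
          have hTuniv : T = univ := Finset.eq_univ_of_card T (by rw [Fintype.card_fin]; omega)
          have hrex : ((univ : Finset (Fin 5)) \ Q).card = 1 := by
            rw [Finset.card_sdiff_of_subset (subset_univ Q), card_univ, hQcard]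
            rfl
          obtain ⟨r, hr⟩ := Finset.card_eq_one.1 hrex
          have hrQ : r ∉ Q := by
            have : r ∈ (univ : Finset (Fin 5)) \ Q := by rw [hr]; exact Finset.mem_singleton_self r
            exact (Finset.mem_sdiff.1 this).2
          have hallQ : ∀ p : Fin 5, p ∉ Q → p = r := by
            intro p hp
            have : p ∈ (univ : Finset (Fin 5)) \ Q := Finset.mem_sdiff.2 ⟨mem_univ p, hp⟩
            rw [hr] at this
            exact Finset.mem_singleton.1 this
          have lemNA : ∀ k, k ∈ T → k ∉ TA → S.E k ≤ 4 := by
            intro k hkT hkA'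
            by_cases hdr : S.deg k r = 0
            · have hz : ∀ p : Fin 5, S.deg k p = 0 := by
                intro p
                rw [deg, Finset.card_eq_zero, Finset.eq_empty_iff_forall_notMem]
                intro q hq
                have hopq := mem_Nb.1 hq
                by_cases hpQ : p ∈ Q
                · by_cases hqQ : q ∈ Q
                  · exact hNonA k hkT hkA' p q hpQ hqQ hopq
                  · have hqr : q = r := hallQ q hqQ
                    subst hqr
                    have hmem : p ∈ S.Nb k q := mem_Nb.2 (S.orth_symm _ _ _ hopq)
                    rw [deg, Finset.card_eq_zero] at hdr
                    rw [hdr] at hmem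
                    exact Finset.notMem_empty p hmem
                · have hpr : p = r := hallQ p hpQ
                  subst hpr
                  rw [deg, Finset.card_eq_zero] at hdr
                  rw [hdr] at hq
                  exact Finset.notMem_empty q hq
              have : S.E k = 0 := Finset.sum_eq_zero (fun p _ => hz p)
              omega
            · obtain ⟨qh, hqh⟩ := Finset.card_pos.1
                (by rw [deg] at hdr; omega : 0 < (S.Nb k r).card)
              have hoq := mem_Nb.1 hqh
              have hqhQ : qh ∈ Q := by
                by_contra h
                exact orth_ne hoq (hallQ qh h).symm
              have hNbr : S.Nb k r = S.cls k qh := Nb_eq_cls hqh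
              have hCsubQ : S.cls k qh ⊆ Q := hSubQ k qh (hTQcls k hkT qh hqhQ).2
              have hdegother : ∀ p, p ∈ Q → p ∉ S.cls k qh → S.deg k p = 0 := by
                intro p hpQ hpC
                rw [deg, Finset.card_eq_zero, Finset.eq_empty_iff_forall_notMem]
                intro q hq
                have hopq := mem_Nb.1 hq
                by_cases hqQ : q ∈ Q
                · exact hNonA k hkT hkA' p q hpQ hqQ hopq
                · have hqr : q = r := hallQ q hqQ
                  subst hqr
                  apply hpC
                  rw [← hNbr]
                  exact mem_Nb.2 (S.orth_symm _ _ _ hopq)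
              have hpt2 : ∀ p : Fin 5, S.deg k p ≤
                  (if p = r then 2 else 0) + (if p ∈ S.cls k qh then 1 else 0) := by
                intro p
                by_cases hpr : p = r
                · subst hpr
                  rw [if_pos rfl]
                  have := deg_le_two (S := S) k p
                  omega
                · rw [if_neg hpr]
                  have hpQ : p ∈ Q := by
                    by_contra h
                    exact hpr (hallQ p h)
                  by_cases hpC : p ∈ S.cls k qh
                  · rw [if_pos hpC]
                    have := hdegQ k hkT hkA' p hpQ
                    omega
                  · rw [if_neg hpC, hdegother p hpQ hpC]
              have hEle : S.E k ≤ 4 := by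
                calc S.E k ≤ ∑ p : Fin 5, ((if p = r then 2 else 0) +
                      (if p ∈ S.cls k qh then 1 else 0)) :=
                      Finset.sum_le_sum (fun p _ => hpt2 p)
                  _ = 4 := by
                      rw [Finset.sum_add_distrib]
                      have e1 : ∑ p : Fin 5, (if p = r then (2:ℕ) else 0) = 2 := by
                        rw [Finset.sum_ite_eq' univ r (fun _ => (2:ℕ))]
                        simp
                      have e2 : ∑ p : Fin 5, (if p ∈ S.cls k qh then (1:ℕ) else 0) = 2 := by
                        rw [Finset.sum_ite_mem, Finset.univ_inter, Finset.sum_const, smul_eq_mul,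
                          (hTQcls k hkT qh hqhQ).2]
                      rw [e1, e2]
              exact hEle
          have hsum16 : ∑ i, S.E i ≤ 16 := by
            have hpt3 : ∀ k : Fin 3, S.E k ≤ if k = kA then 8 else 4 := by
              intro k
              by_cases hk : k = kA
              · subst hk
                rw [if_pos rfl]
                exact hE_T k hkAT
              · rw [if_neg hk]
                apply lemNA k (by rw [hTuniv]; exact mem_univ k)
                rw [hTAsing]
                simpa using hk
            calc ∑ i, S.E i ≤ ∑ k : Fin 3, (if k = kA then 8 else 4) :=
                  Finset.sum_le_sum (fun k _ => hpt3 k)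
              _ = 16 := by
                  have : ∀ k : Fin 3, (if k = kA then (8:ℕ) else 4) =
                      (if k = kA then 4 else 0) + 4 := by
                    intro k; by_cases hk : k = kA <;> simp [hk]
                  simp only [this]
                  rw [Finset.sum_add_distrib, Finset.sum_ite_eq' univ kA (fun _ => (4:ℕ))]
                  simp
          have : (3 + 2) * (3 + 1) ≤ (16 : ℕ) := le_trans hdem hsum16
          omega
        · -- |T| ≤ 2 : the star argument
          have hT2 : T.card ≤ 2 := by omega
          have hTBeq : T.card + Bs.card = n := by
            have hexp : (n + 2) * (n + 1) = n * (n + 1) + 2 * (n + 1) := by ring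
            have hge : n ≤ T.card + Bs.card := by omega
            omega
          have hUnionTB : ∀ k : Fin n, k ∈ T ∨ k ∈ Bs := by
            have hcu : (T ∪ Bs).card = n := by
              rw [Finset.card_union_of_disjoint hTBdisj]; omega
            have huniv : T ∪ Bs = univ := Finset.eq_univ_of_card _ (by rw [Fintype.card_fin]; omega)
            intro k
            have : k ∈ T ∪ Bs := by rw [huniv]; exact mem_univ k
            exact Finset.mem_union.1 this
          have hBsne : Bs.Nonempty := by
            rw [← Finset.card_pos]
            omega
          have hCBex : ∀ k : Fin n, ∃ p, k ∈ Bs → (S.cls k p).card = 2 := by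
            intro k
            by_cases hk : k ∈ Bs
            · obtain ⟨p, hp⟩ := (Finset.mem_filter.1 hk).2.1
              exact ⟨p, fun _ => hp⟩
            · exact ⟨pA, fun h => absurd h hk⟩
          choose pBf hpBf using hCBex
          have hCB2 : ∀ k, k ∈ Bs → (S.cls k (pBf k)).card = 2 := hpBf
          have hBne_i₀ : ∀ k, k ∈ Bs → k ≠ i₀ := fun k hk h =>
            (Finset.mem_filter.1 hk).2.2 (h ▸ hi₀T)
          have hBX : ∀ k, k ∈ Bs → ∃ x y, x ∈ A ∧ y ∈ A' ∧ S.cls k (pBf k) = {x, y} :=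
            fun k hk => hX k (pBf k) (hBne_i₀ k hk) (hCB2 k hk)
          have hstar : ∃ v, v ∈ Q ∧ ∀ k, k ∈ Bs → v ∈ S.cls k (pBf k) := by
            obtain ⟨k₀, hk₀⟩ := hBsne
            obtain ⟨x₀, y₀, hx₀, hy₀, hC₀⟩ := hBX k₀ hk₀
            by_cases hallx : ∀ k, k ∈ Bs → x₀ ∈ S.cls k (pBf k)
            · exact ⟨x₀, Finset.mem_union_left _ hx₀, hallx⟩
            · push_neg at hallx
              obtain ⟨k₁, hk₁, hx₀k₁⟩ := hallx
              have hk₁0 : k₁ ≠ k₀ := by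
                rintro rfl
                exact hx₀k₁ (by rw [hC₀]; simp)
              obtain ⟨x₁, y₁, hx₁, hy₁, hC₁⟩ := hBX k₁ hk₁
              obtain ⟨z, hz₀, hz₁⟩ := cls_meet hk₁0.symm (hCB2 k₀ hk₀) (hCB2 k₁ hk₁)
              have hzy₀ : z = y₀ := by
                rw [hC₀] at hz₀
                simp only [Finset.mem_insert, Finset.mem_singleton] at hz₀
                rcases hz₀ with rfl | rfl
                · exact absurd hz₁ hx₀k₁
                · rfl
              have hy₀k₁ : y₀ ∈ S.cls k₁ (pBf k₁) := by rw [← hzy₀]; exact hz₁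
              have hy₀y₁ : y₀ = y₁ := by
                rw [hC₁] at hy₀k₁
                simp only [Finset.mem_insert, Finset.mem_singleton] at hy₀k₁
                rcases hy₀k₁ with h | h
                · exfalso
                  exact Finset.disjoint_left.1 hAA'disj (by rw [h]; exact hx₁) hy₀
                · exact h
              refine ⟨y₀, Finset.mem_union_right _ hy₀, ?_⟩
              intro k hk
              by_cases hkk₀ : k = k₀
              · subst hkk₀; rw [hC₀]; simp
              by_cases hkk₁ : k = k₁
              · subst hkk₁
                rw [← hzy₀]
                exact hz₁
              by_contra hy₀k
              obtain ⟨xk, yk, hxk, hyk, hCk⟩ := hBX k hk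
              obtain ⟨z', hz'k, hz'0⟩ := cls_meet (show k ≠ k₀ from hkk₀) (hCB2 k hk) (hCB2 k₀ hk₀)
              have hz'x₀ : z' = x₀ := by
                rw [hC₀] at hz'0
                simp only [Finset.mem_insert, Finset.mem_singleton] at hz'0
                rcases hz'0 with rfl | rfl
                · rfl
                · exact absurd hz'k hy₀k
              have hx₀k : x₀ ∈ S.cls k (pBf k) := by rw [← hz'x₀]; exact hz'k
              have hxkx₀ : xk = x₀ := by
                rw [hCk] at hx₀k
                simp only [Finset.mem_insert, Finset.mem_singleton] at hx₀k
                rcases hx₀k with h | h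
                · exact h.symm
                · exfalso
                  exact Finset.disjoint_left.1 hAA'disj hx₀ (by rw [h]; exact hyk)
              obtain ⟨z'', hz''k, hz''1⟩ := cls_meet (show k ≠ k₁ from hkk₁) (hCB2 k hk) (hCB2 k₁ hk₁)
              rw [hCk, hxkx₀] at hz''k
              rw [hC₁] at hz''1
              simp only [Finset.mem_insert, Finset.mem_singleton] at hz''k hz''1
              rcases hz''k with rfl | rfl
              · rcases hz''1 with h | h
                · apply hx₀k₁
                  rw [hC₁, h]
                  simp
                · exact Finset.disjoint_left.1 hAA'disj hx₀ (by rw [h]; exact hy₁)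
              · rcases hz''1 with h | h
                · exact Finset.disjoint_left.1 hAA'disj (by rw [h]; exact hx₁) hyk
                · apply hy₀k
                  rw [hCk]
                  simp only [Finset.mem_insert, Finset.mem_singleton]
                  right
                  rw [hy₀y₁, ← h]
          obtain ⟨v, hvQ, hvB⟩ := hstar
          have hu := hYf kA v hkAT hvQ
          have hvu : v ≠ Yf kA v := fun h => hu.1 h.symm
          obtain ⟨kx, hkx⟩ := S.cov v (Yf kA v) hvu
          have hkxB : kx ∈ Bs := by
            rcases hUnionTB kx with hkxT | hkxB
            · exfalso
              by_cases hkxA : kx ∈ TA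
              · have hkxkA : kx = kA := by
                  rw [hTAsing] at hkxA
                  exact Finset.mem_singleton.1 hkxA
                subst hkxkA
                apply not_par_of_orth hkx
                apply mem_cls.1
                rw [hu.2.2]
                simp
              · exact hNonA kx hkxT hkxA v (Yf kA v) hvQ hu.2.1 hkx
            · exact hkxB
          have hvCB : v ∈ S.cls kx (pBf kx) := hvB kx hkxB
          have hclsv : S.cls kx v = S.cls kx (pBf kx) := (cls_eq_of_mem hvCB).symm
          have hclsvcard : (S.cls kx v).card = 2 := by rw [hclsv]; exact hCB2 kx hkxB
          obtain ⟨w, hwne, hwpair⟩ := pair_of_card_two hclsvcard (mem_cls_self (S := S))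
          have hwmem : w ∈ S.cls kx v := by rw [hwpair]; simp
          have hparvw : S.par kx v w := mem_cls.1 hwmem
          have houw : S.orth kx (Yf kA v) w :=
            S.orth_par kx (Yf kA v) v w (S.orth_symm kx v (Yf kA v) hkx) hparvw
          have hwu : w ≠ Yf kA v := by
            rintro heq
            apply not_par_of_orth hkx
            apply mem_cls.1
            rw [← heq]
            exact hwmem
          have hwQ : w ∈ Q := hSubQ kx v hclsvcard hwmem
          have hukA : Yf kA v ∈ S.cls kA v := by rw [hu.2.2]; simp
          have hwother : w ∉ S.cls kA v := by
            rw [hu.2.2]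
            simp only [Finset.mem_insert, Finset.mem_singleton, not_or]
            exact ⟨hwne, hwu⟩
          have horthkA : S.orth kA (Yf kA v) w := by
            have hwQ' : w ∈ S.cls kA (c₁ kA) ∪ S.cls kA (c₂ kA) := by
              rw [hTpartQ kA hkAT]
              exact hwQ
            rcases (hTQcls kA hkAT v hvQ).1 with he | he
            · have hu1 : Yf kA v ∈ S.cls kA (c₁ kA) := by rw [← he]; exact hukA
              have hw2 : w ∈ S.cls kA (c₂ kA) := by
                rcases Finset.mem_union.1 hwQ' with hw1 | hw2
                · exact absurd (by rw [he]; exact hw1) hwother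
                · exact hw2
              exact hTAorth kA hkA (Yf kA v) w hu1 hw2
            · have hu1 : Yf kA v ∈ S.cls kA (c₂ kA) := by rw [← he]; exact hukA
              have hw2 : w ∈ S.cls kA (c₁ kA) := by
                rcases Finset.mem_union.1 hwQ' with hw1 | hw2
                · exact hw1
                · exact absurd (by rw [he]; exact hw2) hwother
              exact S.orth_symm kA _ _ (hTAorth kA hkA w (Yf kA v) hw2 hu1)
          have hkxkA : kx ≠ kA := by
            rintro rfl
            exact Finset.disjoint_left.1 hTBdisj hkAT hkxB
          have m1 : 2 ≤ S.mult (Yf kA v) w := hmult2 kx kA (Yf kA v) w hkxkA houw horthkA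
          have m2 : 2 ≤ S.mult w (Yf kA v) := hmult2 kx kA w (Yf kA v) hkxkA
            (S.orth_symm _ _ _ houw) (S.orth_symm _ _ _ horthkA)
          have hlow := main_lower (S := S) {(Yf kA v, w), (w, Yf kA v)} (by
            intro z hz
            simp only [Finset.mem_insert, Finset.mem_singleton] at hz
            rcases hz with rfl | rfl
            · exact ⟨fun h => hwu h.symm, m1⟩
            · exact ⟨hwu, m2⟩)
          have hcard2' : ({(Yf kA v, w), (w, Yf kA v)} :
              Finset (Fin (n + 2) × Fin (n + 2))).card = 2 := by
            rw [Finset.card_insert_of_notMem (by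
              simp only [Finset.mem_singleton, Prod.mk.injEq, not_and]
              intro h
              exact absurd h.symm hwu), Finset.card_singleton]
          rw [hcard2'] at hlow
          have hexp : (n + 2) * (n + 1) = n * (n + 1) + 2 * (n + 1) := by ring
          omega





end Setup
end UPB

/-- for odd `n ≥ 3`, there is no `n`-qubit UPB of size `n + 2`. -/
theorem no_upb_size_add_two_of_odd (n : ℕ) (hn : 3 ≤ n) (hodd : Odd n)
    (V : Fin (n + 2) → Fin n → EuclideanSpace ℂ (Fin 2))
    (hV : PairwiseOrthProdFamily V) :
    Extendible V := by
  by_cases hext : Extendible V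
  · exact hext
  exfalso
  obtain ⟨hnz, horth⟩ := hV
  rw [Extendible] at hext
  push_neg at hext
  refine UPB.Setup.false_ (n := n) ?_ hn hodd
  refine
    { par := fun i p q => ∃ t : ℂ, V q i = t • V p i
      orth := fun i p q => ⟪V p i, V q i⟫_ℂ = 0
      par_equiv := ?_
      orth_symm := ?_
      orth_irrefl := ?_
      orth_par := ?_
      orth_two := ?_
      cov := ?_
      NE := ?_ }
  · intro i
    constructor
    · intro p
      exact ⟨1, (one_smul ℂ (V p i)).symm⟩
    · rintro p q ⟨t, ht⟩
      have htne : t ≠ 0 := by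
        rintro rfl
        rw [zero_smul] at ht
        exact hnz q i ht
      refine ⟨t⁻¹, ?_⟩
      rw [ht, smul_smul, inv_mul_cancel₀ htne, one_smul]
    · rintro p q r ⟨t, ht⟩ ⟨t', ht'⟩
      exact ⟨t' * t, by rw [ht', ht, smul_smul]⟩
  · intro i p q h
    rw [inner_eq_zero_symm] at h
    exact h
  · intro i p h
    exact hnz p i (inner_self_eq_zero.1 h)
  · rintro i p q q' h ⟨t, ht⟩
    rw [ht, inner_smul_right, h, mul_zero]
  · intro i p q q' h h'
    exact UPB.parallel_of_orth (hnz p i) (hnz q i) (hnz q' i) h h'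
  · intro p q hpq
    exact horth p q hpq
  · intro f
    obtain ⟨p, hp⟩ := hext (fun i => UPB.perp (V (f i) i))
      (fun i => UPB.perp_ne_zero (hnz (f i) i))
    refine ⟨p, fun i => ?_⟩
    rintro ⟨t, ht⟩
    apply hp i
    rw [ht]
    exact UPB.inner_perp_smul t (V (f i) i)
end

section
/- For every n ≥ 4, there exists an n-qubit unextendible product basis of size 2^n − 4. -/
open scoped InnerProductSpace

noncomputable def ket (a b : ℂ) : EuclideanSpace ℂ (Fin 2) :=
  (WithLp.equiv 2 (Fin 2 → ℂ)).symm ![a, b]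

@[simp] lemma ket_apply0 (a b : ℂ) : ket a b 0 = a := rfl
@[simp] lemma ket_apply1 (a b : ℂ) : ket a b 1 = b := rfl

lemma inner_ket (w : EuclideanSpace ℂ (Fin 2)) (c d : ℂ) :
    ⟪w, ket c d⟫_ℂ = (starRingEnd ℂ) (w 0) * c + (starRingEnd ℂ) (w 1) * d := by
  simp [ket, PiLp.inner_apply, Fin.sum_univ_two, RCLike.inner_apply]; ring

lemma euclid_eq_zero {w : EuclideanSpace ℂ (Fin 2)} (h0 : w 0 = 0) (h1 : w 1 = 0) : w = 0 := by
  ext t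
  fin_cases t <;> simpa

lemma ket_ne_zero_left {a b : ℂ} (h : a ≠ 0) : ket a b ≠ 0 := by
  intro hk
  have : ket a b 0 = 0 := by rw [hk]; rfl
  exact h (by simpa using this)

lemma ket_ne_zero_right {a b : ℂ} (h : b ≠ 0) : ket a b ≠ 0 := by
  intro hk
  have : ket a b 1 = 0 := by rw [hk]; rfl
  exact h (by simpa using this)

/-- first/second components of the Shifts table -/
noncomputable def SA : Fin 4 → Fin 3 → ℂ :=
  ![![1, 0, 1], ![0, 1, 1], ![1, 1, 0], ![1, 1, 1]]

noncomputable def SB : Fin 4 → Fin 3 → ℂ :=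
  ![![0, 1, 1], ![1, 1, 0], ![1, 0, 1], ![-1, -1, -1]]

noncomputable def Svec (p : Fin 4) (i : Fin 3) : EuclideanSpace ℂ (Fin 2) :=
  ket (SA p i) (SB p i)

noncomputable def ebit (t : Fin 2) : EuclideanSpace ℂ (Fin 2) :=
  ket (if t = 0 then 1 else 0) (if t = 0 then 0 else 1)

lemma inner_ebit (w : EuclideanSpace ℂ (Fin 2)) (t : Fin 2) :
    ⟪w, ebit t⟫_ℂ = (starRingEnd ℂ) (w t) := by
  fin_cases t <;> simp [ebit, inner_ket]

lemma two_orth {a b u0 u1 v0 v1 : ℂ} (hdet : u0 * v1 - u1 * v0 ≠ 0)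
    (h1 : (starRingEnd ℂ) a * u0 + (starRingEnd ℂ) b * u1 = 0)
    (h2 : (starRingEnd ℂ) a * v0 + (starRingEnd ℂ) b * v1 = 0) :
    a = 0 ∧ b = 0 := by
  have ha : (starRingEnd ℂ) a * (u0 * v1 - u1 * v0) = 0 := by ring_nf; linear_combination v1 * h1 - u1 * h2
  have hb : (starRingEnd ℂ) b * (u0 * v1 - u1 * v0) = 0 := by ring_nf; linear_combination u0 * h2 - v0 * h1
  constructor
  · have := (mul_eq_zero.1 ha).resolve_right hdet
    simpa using congrArg (starRingEnd ℂ) this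
  · have := (mul_eq_zero.1 hb).resolve_right hdet
    simpa using congrArg (starRingEnd ℂ) this

lemma col_det (p q : Fin 4) (i : Fin 3) (h : p ≠ q) :
    SA p i * SB q i - SB p i * SA q i ≠ 0 := by
  fin_cases p <;> fin_cases q <;> fin_cases i <;>
    first
    | exact absurd rfl h
    | norm_num [SA, SB]

lemma col_indep (p q : Fin 4) (i : Fin 3) (hpq : p ≠ q)
    (w : EuclideanSpace ℂ (Fin 2))
    (h1 : ⟪w, Svec p i⟫_ℂ = 0) (h2 : ⟪w, Svec q i⟫_ℂ = 0) : w = 0 := by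
  rw [Svec, inner_ket] at h1 h2
  obtain ⟨ha, hb⟩ := two_orth (col_det p q i hpq) h1 h2
  exact euclid_eq_zero ha hb

lemma ebit_apply_ne {s t : Fin 2} (h : s ≠ t) : ebit s t = 0 := by
  fin_cases s <;> fin_cases t <;> simp_all [ebit]

lemma shifts_orth (p q : Fin 4) (h : p ≠ q) :
    ∃ i : Fin 3, ⟪Svec p i, Svec q i⟫_ℂ = 0 := by
  fin_cases p <;> fin_cases q <;>
    first
    | exact absurd rfl h
    | (refine ⟨0, ?_⟩; norm_num [Svec, inner_ket, SA, SB]; done)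
    | (refine ⟨1, ?_⟩; norm_num [Svec, inner_ket, SA, SB]; done)
    | (refine ⟨2, ?_⟩; norm_num [Svec, inner_ket, SA, SB, Matrix.cons_val_two, Matrix.tail_cons, Matrix.head_cons]; done)

noncomputable def rowX (n : ℕ) (p : Fin (2 ^ n - 4)) : Fin (2 ^ n) :=
  ⟨p.val + 4, by have h := p.isLt; omega⟩

noncomputable def rowBits (n : ℕ) (p : Fin (2 ^ n - 4)) : Fin n → Fin 2 :=
  finFunctionFinEquiv.symm (rowX n p)

noncomputable def upbV (n : ℕ) (p : Fin (2 ^ n - 4)) (i : Fin n) :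
    EuclideanSpace ℂ (Fin 2) :=
  if hp : p.val < 4 then
    if hi : i.val < 3 then Svec ⟨p.val, hp⟩ ⟨i.val, hi⟩ else ket 1 0
  else ebit (rowBits n p i)

lemma upbV_low {n : ℕ} (p : Fin (2 ^ n - 4)) (hp : p.val < 4) (i : Fin n)
    (hi : i.val < 3) : upbV n p i = Svec ⟨p.val, hp⟩ ⟨i.val, hi⟩ := by
  simp [upbV, hp, hi]

lemma upbV_low_high {n : ℕ} (p : Fin (2 ^ n - 4)) (hp : p.val < 4) (i : Fin n)
    (hi : ¬ i.val < 3) : upbV n p i = ket 1 0 := by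
  simp [upbV, hp, hi]

lemma upbV_high {n : ℕ} (p : Fin (2 ^ n - 4)) (hp : ¬ p.val < 4) (i : Fin n) :
    upbV n p i = ebit (rowBits n p i) := dif_neg hp

lemma bits_small {n : ℕ} (h3 : 3 ≤ n) (b : Fin n → Fin 2)
    (h : ∀ j : Fin n, 3 ≤ (j : ℕ) → b j = 0) : (finFunctionFinEquiv b : ℕ) < 8 := by
  rw [finFunctionFinEquiv_apply]
  have hle : ∑ i : Fin n, (b i : ℕ) * 2 ^ (i : ℕ)
      ≤ ∑ i : Fin n, (if (i : ℕ) < 3 then 2 ^ (i : ℕ) else 0) := by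
    apply Finset.sum_le_sum
    intro i _
    by_cases hi : (i : ℕ) < 3
    · simp only [hi, if_true]
      have : (b i : ℕ) ≤ 1 := by omega
      calc (b i : ℕ) * 2 ^ (i : ℕ) ≤ 1 * 2 ^ (i : ℕ) := Nat.mul_le_mul_right _ this
        _ = 2 ^ (i : ℕ) := one_mul _
    · simp [hi, h i (by omega)]
  have heq : ∑ i : Fin n, (if (i : ℕ) < 3 then 2 ^ (i : ℕ) else 0)
      = ∑ k ∈ Finset.range n, (if k < 3 then 2 ^ k else 0) :=
    Fin.sum_univ_eq_sum_range (fun k => if k < 3 then 2 ^ k else 0) n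
  have heq2 : ∑ k ∈ Finset.range n, (if k < 3 then 2 ^ k else 0)
      = ∑ k ∈ Finset.range 3, (if k < 3 then 2 ^ k else 0) := by
    refine (Finset.sum_subset (Finset.range_subset_range.2 h3) ?_).symm
    intro k _ hk
    simp only [Finset.mem_range, not_lt] at hk
    simp [Nat.not_lt.2 hk]
  have : ∑ k ∈ Finset.range 3, (if k < 3 then 2 ^ k else 0) = 7 := by decide
  omega

lemma bits_ge {n : ℕ} (b : Fin n → Fin 2) (j : Fin n) (hj : b j = 1) :
    2 ^ (j : ℕ) ≤ (finFunctionFinEquiv b : ℕ) := by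
  rw [finFunctionFinEquiv_apply]
  calc 2 ^ (j : ℕ) = (b j : ℕ) * 2 ^ (j : ℕ) := by rw [hj]; simp
    _ ≤ ∑ i : Fin n, (b i : ℕ) * 2 ^ (i : ℕ) :=
        Finset.single_le_sum (f := fun i : Fin n => (b i : ℕ) * 2 ^ (i : ℕ))
          (fun i _ => Nat.zero_le _) (Finset.mem_univ j)


lemma fin2_eq (t : Fin 2) : t = 0 ∨ t = 1 := by fin_cases t <;> simp

lemma Svec_ne_zero (p : Fin 4) (i : Fin 3) : Svec p i ≠ 0 := by
  rw [Svec]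
  fin_cases p <;> fin_cases i <;>
    first
    | (apply ket_ne_zero_left; norm_num [SA]; done)
    | (apply ket_ne_zero_right; norm_num [SB]; done)

/-- for every `n ≥ 4` there exists an `n`-qubit UPB of size
`2^n − 4`. -/
theorem exists_upb_size_pow_sub_four (n : ℕ) (hn : 4 ≤ n) :
    ∃ V : Fin (2 ^ n - 4) → Fin n → EuclideanSpace ℂ (Fin 2), IsUPB V := by
  have hpow : 16 ≤ 2 ^ n := by
    calc (16 : ℕ) = 2 ^ 4 := by norm_num
      _ ≤ 2 ^ n := Nat.pow_le_pow_right (by norm_num) hn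
  refine ⟨upbV n, ⟨?_, ?_⟩, ?_, ?_⟩
  · -- nonzero
    intro p i
    by_cases hp : p.val < 4
    · by_cases hi : i.val < 3
      · rw [upbV_low p hp i hi]
        exact Svec_ne_zero _ _
      · rw [upbV_low_high p hp i hi]
        exact ket_ne_zero_left one_ne_zero
    · rw [upbV_high p hp i]
      rcases fin2_eq (rowBits n p i) with h | h <;> rw [h, ebit]
      · exact ket_ne_zero_left (by norm_num)
      · exact ket_ne_zero_right (by norm_num)
  · -- pairwise orthogonal
    intro p q hpq
    have hvalne : p.val ≠ q.val := fun h => hpq (Fin.ext h)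
    by_cases hp : p.val < 4 <;> by_cases hq : q.val < 4
    · obtain ⟨i, hi⟩ := shifts_orth ⟨p.val, hp⟩ ⟨q.val, hq⟩
        (fun h => hvalne (by simpa [Fin.ext_iff] using h))
      refine ⟨⟨i.val, by have := i.isLt; omega⟩, ?_⟩
      rw [upbV_low p hp _ i.isLt, upbV_low q hq _ i.isLt]
      simpa using hi
    · -- p Shifts row, q basis row
      have h8 : 8 ≤ ((rowX n q : Fin (2 ^ n)) : ℕ) := by simp [rowX]; omega
      have h8' : 8 ≤ (finFunctionFinEquiv (rowBits n q) : ℕ) := by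
        rwa [rowBits, Equiv.apply_symm_apply]
      by_contra hcon
      push_neg at hcon
      have hzero : ∀ j : Fin n, 3 ≤ (j : ℕ) → rowBits n q j = 0 := by
        intro j hj
        by_contra hb
        have hb1 : rowBits n q j = 1 := (fin2_eq _).resolve_left hb
        apply hcon j
        rw [upbV_low_high p hp j (by omega), upbV_high q hq j, hb1, inner_ebit]
        simp
      have := bits_small (by omega) (rowBits n q) hzero
      omega
    · -- p basis row, q Shifts row
      have h8' : 8 ≤ (finFunctionFinEquiv (rowBits n p) : ℕ) := by
        rw [rowBits, Equiv.apply_symm_apply]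
        simp [rowX]; omega
      by_contra hcon
      push_neg at hcon
      have hzero : ∀ j : Fin n, 3 ≤ (j : ℕ) → rowBits n p j = 0 := by
        intro j hj
        by_contra hb
        have hb1 : rowBits n p j = 1 := (fin2_eq _).resolve_left hb
        apply hcon j
        rw [upbV_low_high q hq j (by omega), upbV_high p hp j, hb1, inner_ket]
        simp [ebit]
      have := bits_small (by omega) (rowBits n p) hzero
      omega
    · -- both basis rows
      have hXne : rowX n p ≠ rowX n q := by
        intro h
        exact hvalne (by simpa [rowX, Fin.ext_iff] using h)
      have hbne : rowBits n p ≠ rowBits n q := by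
        intro h
        exact hXne (finFunctionFinEquiv.symm.injective h)
      obtain ⟨i, hi⟩ := Function.ne_iff.1 hbne
      refine ⟨i, ?_⟩
      rw [upbV_high p hp i, upbV_high q hq i, inner_ebit,
        ebit_apply_ne hi]
      simp
  · -- size
    omega
  · -- unextendible
    rintro ⟨w, hw0, hwo⟩
    have hwcomp : ∀ i : Fin n, w i 0 ≠ 0 ∨ w i 1 ≠ 0 := by
      intro i
      by_contra hcc
      push_neg at hcc
      exact hw0 i (euclid_eq_zero hcc.1 hcc.2)
    -- Step A : tail components are |0⟩
    have keyA : ∀ j : Fin n, 3 ≤ (j : ℕ) → w j 1 = 0 := by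
      intro j hj3
      by_contra hwj
      set c : Fin n → Fin 2 := fun i => if i = j then 1 else if w i 0 = 0 then 1 else 0
        with hc
      have hkey : ∀ i, w i (c i) ≠ 0 := by
        intro i
        by_cases hij : i = j
        · subst hij
          have hci : c i = 1 := by simp [hc]
          rw [hci]
          exact hwj
        · by_cases h0 : w i 0 = 0
          · have hci : c i = 1 := by simp [hc, hij, h0]
            rw [hci]
            exact (hwcomp i).resolve_left (not_not_intro h0)
          · have hci : c i = 0 := by simp [hc, hij, h0]
            rw [hci]
            exact h0
      have hcj : c j = 1 := by simp [hc]
      set X := finFunctionFinEquiv c with hX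
      have hX8 : 8 ≤ (X : ℕ) := by
        have h1 : 2 ^ (j : ℕ) ≤ (X : ℕ) := bits_ge c j hcj
        have h2 : (8 : ℕ) = 2 ^ 3 := by norm_num
        have h3 : (2 : ℕ) ^ 3 ≤ 2 ^ (j : ℕ) := Nat.pow_le_pow_right (by norm_num) hj3
        omega
      have hXlt := X.isLt
      set r : Fin (2 ^ n - 4) := ⟨(X : ℕ) - 4, by omega⟩ with hr
      have hr4 : ¬ r.val < 4 := by simp [hr]; omega
      have hrow : ∀ i, upbV n r i = ebit (c i) := by
        intro i
        rw [upbV_high r hr4 i]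
        congr 1
        have hXX : rowX n r = X := by
          apply Fin.ext
          simp [rowX, hr]
          omega
        rw [rowBits, hXX, hX, Equiv.symm_apply_apply]
      obtain ⟨i, hi⟩ := hwo r
      rw [hrow i, inner_ebit] at hi
      exact hkey i (by simpa using hi)
    have keyA' : ∀ j : Fin n, 3 ≤ (j : ℕ) → w j 0 ≠ 0 := by
      intro j hj3 h0
      exact hw0 j (euclid_eq_zero h0 (keyA j hj3))
    -- Step B : each Shifts row must be hit within the first three qubits
    have hB : ∀ p4 : Fin 4, ∃ i : Fin 3,
        ⟪w ⟨(i : ℕ), by have := i.isLt; omega⟩, Svec p4 i⟫_ℂ = 0 := by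
      intro p4
      have hp4 := p4.isLt
      set r : Fin (2 ^ n - 4) := ⟨p4.val, by omega⟩ with hrr
      have hr4 : r.val < 4 := by simpa [hrr] using hp4
      obtain ⟨i, hi⟩ := hwo r
      by_cases h3 : (i : ℕ) < 3
      · refine ⟨⟨(i : ℕ), h3⟩, ?_⟩
        rw [upbV_low r hr4 i h3] at hi
        have : (⟨r.val, hr4⟩ : Fin 4) = p4 := by simp [hrr]
        rw [this] at hi
        convert hi using 2
      · exfalso
        rw [upbV_low_high r hr4 i h3, inner_ket] at hi
        simp only [ket_apply0, ket_apply1, mul_one, mul_zero, add_zero] at hi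
        exact keyA' i (by omega) (by simpa using hi)
    choose f hf using hB
    have hninj : ¬ Function.Injective f := by
      intro hinj
      have := Fintype.card_le_of_injective f hinj
      simp at this
    rw [Function.not_injective_iff] at hninj
    obtain ⟨p, q, heq, hne⟩ := hninj
    have h1 := hf p
    have h2 := hf q
    rw [← heq] at h2
    have hzero := col_indep p q (f p) hne _ h1 h2
    exact hw0 _ hzero
end
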